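/- arXiv:2005.02461 — 11 statements merged into one kernel-verified Lean document; each statement's English description precedes it below -/
import Mathlib

section
/- Let F be a property of groups such that: (i) every group with property F is finite and nilpotent; (ii) if G has property F and f : G → H is a surjective group homomorphism, then H has property F; (iii) if G₁, …, G_n all have property F and D is a subgroup of the product G₁ × ⋯ × G_n such that every coordinate projection D → G_i is surjective, then D has property F. Then F is closed under subgroups: if A has property F and B is a subgroup of A, then B has property F. -/
open Subgroup hiding lowerCentralSeries
open scoped commutatorElement

abbrev lcsT (G : Type*) [Group G] (n : ℕ) : Subgroup G := (⊤ : Subgroup G).lowerCentralSeries n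

section Prelim
variable {G H : Type*} [Group G] [Group H]

theorem lcs_map_le (f : G →* H) (n : ℕ) :
    Subgroup.map f (lcsT G n) ≤ lcsT H n := by
  induction n with
  | zero => exact le_top
  | succ n ih =>
      show Subgroup.map f ⁅lcsT G n, (⊤ : Subgroup G)⁆ ≤ ⁅lcsT H n, (⊤ : Subgroup H)⁆
      rw [Subgroup.map_commutator]
      exact Subgroup.commutator_mono ih le_top

theorem lcs_map_mem (f : G →* H) (n : ℕ) {x : G} (hx : x ∈ lcsT G n) :
    f x ∈ lcsT H n :=
  lcs_map_le f n ⟨x, hx, rfl⟩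

theorem comm_mul_left (a b c : G) : ⁅a*b, c⁆ = a * ⁅b,c⁆ * a⁻¹ * ⁅a,c⁆ := by
  simp only [commutatorElement_def]; group

theorem comm_mul_right (a b c : G) : ⁅a, b*c⁆ = ⁅a,b⁆ * (b * ⁅a,c⁆ * b⁻¹) := by
  simp only [commutatorElement_def]; group

theorem comm_inv_left (a b : G) : ⁅a⁻¹, b⁆ = a⁻¹ * ⁅a,b⁆⁻¹ * a := by
  simp only [commutatorElement_def]; group

theorem comm_inv_right (a b : G) : ⁅a, b⁻¹⁆ = b⁻¹ * ⁅a,b⁆⁻¹ * b := by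
  simp only [commutatorElement_def]; group

theorem central_conj {v : G} (h : ∀ z : G, v * z = z * v) (b : G) : b * v * b⁻¹ = v := by
  rw [mul_assoc, h b⁻¹, ← mul_assoc, mul_inv_cancel, one_mul]

end Prelim

section SpanSec
variable {G : Type*} [Group G]

/-- iterated left-normed commutators of weight `n+1` in elements of `S`. -/
def Cset (S : Set G) : ℕ → Set G :=
  fun n => Nat.rec S (fun _ prev => {e | ∃ u ∈ prev, ∃ s ∈ S, e = ⁅u, s⁆}) n

theorem Cset_zero (S : Set G) : Cset S 0 = S := rfl

theorem Cset_succ (S : Set G) (n : ℕ) :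
    Cset S (n+1) = {e | ∃ u ∈ Cset S n, ∃ s ∈ S, e = ⁅u, s⁆} := rfl

theorem Cset_sub_lcs (S : Set G) (n : ℕ) : ∀ u ∈ Cset S n, u ∈ lcsT G n := by
  induction n with
  | zero => intro u _; exact Subgroup.mem_top u
  | succ n ih =>
      rintro u ⟨w, hw, s, _, rfl⟩
      exact Subgroup.commutator_mem_commutator (ih w hw) (Subgroup.mem_top s)

theorem span_lemma (S : Set G) (hS : Subgroup.closure S = ⊤) (n : ℕ) :
    lcsT G n ≤ Subgroup.closure (Cset S n) ⊔ lcsT G (n+1) := by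
  induction n with
  | zero => rw [Cset_zero, hS]; exact le_sup_left
  | succ n ih =>
      show ⁅lcsT G n, (⊤ : Subgroup G)⁆ ≤ _
      rw [Subgroup.commutator_le]
      intro x hx y _
      set N := lcsT G (n+2) with hN
      let π : G →* G ⧸ N := QuotientGroup.mk' N
      have hπsurj : Function.Surjective π := QuotientGroup.mk'_surjective N
      have hker : ∀ z : G, z ∈ N → π z = 1 := fun z hz => (QuotientGroup.eq_one_iff z).mpr hz
      -- centrality of images of lcs (n+1)
      have Zc : ∀ u ∈ lcsT G (n+1), ∀ b : G ⧸ N, π u * b = b * π u := by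
        intro u hu b
        obtain ⟨z, rfl⟩ := hπsurj b
        have h1 : ⁅u, z⁆ ∈ N := Subgroup.commutator_mem_commutator hu (Subgroup.mem_top z)
        have h2 : ⁅π u, π z⁆ = 1 := by
          rw [← map_commutatorElement]; exact hker _ h1
        exact commutatorElement_eq_one_iff_mul_comm.mp h2
      set V : Subgroup (G ⧸ N) := Subgroup.closure (π '' Cset S (n+1)) with hV
      -- the main claim in the quotient
      suffices h : ⁅π x, π y⁆ ∈ V by
        rw [← map_commutatorElement] at h
        rw [hV, ← MonoidHom.map_closure] at h
        obtain ⟨w, hw, hwe⟩ := h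
        have : w⁻¹ * ⁅x, y⁆ ∈ N := by
          have := QuotientGroup.eq.mp (hwe.symm ▸ rfl : π w = π ⁅x,y⁆)
          simpa using this
        have hxy : ⁅x,y⁆ = w * (w⁻¹ * ⁅x,y⁆) := by group
        rw [hxy]
        exact Subgroup.mul_mem _ (Subgroup.mem_sup_left hw) (Subgroup.mem_sup_right this)
      -- subgroup K of good elements
      let Kcar : Set (G ⧸ N) := {a | ∀ b : G ⧸ N, ⁅a, b⁆ ∈ V ∧ ∀ z : G ⧸ N, ⁅a,b⁆ * z = z * ⁅a,b⁆}
      have hK1 : (1 : G ⧸ N) ∈ Kcar := by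
        intro b
        have : ⁅(1 : G ⧸ N), b⁆ = 1 := by simp [commutatorElement_def]
        rw [this]; exact ⟨Subgroup.one_mem V, fun z => by group⟩
      have hKmul : ∀ a₁ a₂, a₁ ∈ Kcar → a₂ ∈ Kcar → a₁ * a₂ ∈ Kcar := by
        intro a₁ a₂ h₁ h₂ b
        have e : ⁅a₁*a₂, b⁆ = a₁ * ⁅a₂,b⁆ * a₁⁻¹ * ⁅a₁,b⁆ := comm_mul_left a₁ a₂ b
        have e2 : a₁ * ⁅a₂,b⁆ * a₁⁻¹ = ⁅a₂,b⁆ := central_conj ((h₂ b).2) a₁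
        rw [e, e2]
        refine ⟨Subgroup.mul_mem _ ((h₂ b).1) ((h₁ b).1), fun z => ?_⟩
        rw [mul_assoc, (h₁ b).2 z, ← mul_assoc, (h₂ b).2 z, mul_assoc]
      have hKinv : ∀ a, a ∈ Kcar → a⁻¹ ∈ Kcar := by
        intro a ha b
        have e : ⁅a⁻¹, b⁆ = a⁻¹ * ⁅a,b⁆⁻¹ * a := comm_inv_left a b
        have hcen : ∀ z, ⁅a,b⁆⁻¹ * z = z * ⁅a,b⁆⁻¹ := by
          intro z
          have := (ha b).2 z
          calc ⁅a,b⁆⁻¹ * z = ⁅a,b⁆⁻¹ * z * ⁅a,b⁆ * ⁅a,b⁆⁻¹ := by group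
          _ = ⁅a,b⁆⁻¹ * ⁅a,b⁆ * z * ⁅a,b⁆⁻¹ := by rw [mul_assoc ⁅a,b⁆⁻¹ z ⁅a,b⁆, ← this, ← mul_assoc]
          _ = z * ⁅a,b⁆⁻¹ := by group
        have e2 : a⁻¹ * ⁅a,b⁆⁻¹ * a = ⁅a,b⁆⁻¹ := by
          have := central_conj hcen a⁻¹; exact (by group : a⁻¹ * ⁅a,b⁆⁻¹ * a = a⁻¹ * ⁅a,b⁆⁻¹ * a⁻¹⁻¹).trans this
        rw [e, e2]
        exact ⟨Subgroup.inv_mem _ ((ha b).1), hcen⟩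
      let K : Subgroup (G ⧸ N) :=
        { carrier := Kcar, one_mem' := hK1, mul_mem' := fun {a b} ha hb => hKmul a b ha hb,
          inv_mem' := fun {a} ha => hKinv a ha }
      -- generators of the first kind are in K
      have hgen1 : ∀ u ∈ Cset S n, π u ∈ K := by
        intro u hu
        have hulcs : u ∈ lcsT G n := Cset_sub_lcs S n u hu
        have hcen : ∀ b : G ⧸ N, ∀ z : G ⧸ N, ⁅π u, b⁆ * z = z * ⁅π u, b⁆ := by
          intro b z
          obtain ⟨zb, rfl⟩ := hπsurj b
          rw [← map_commutatorElement]
          exact Zc _ (Subgroup.commutator_mem_commutator hulcs (Subgroup.mem_top zb)) z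
        -- second variable induction
        let K2car : Set (G ⧸ N) := {b | ⁅π u, b⁆ ∈ V}
        have h2one : (1 : G ⧸ N) ∈ K2car := by
          show ⁅π u, (1:G ⧸ N)⁆ ∈ V
          have : ⁅π u, (1 : G ⧸ N)⁆ = 1 := by simp [commutatorElement_def]
          rw [this]; exact Subgroup.one_mem V
        have h2mul : ∀ b₁ b₂, b₁ ∈ K2car → b₂ ∈ K2car → b₁ * b₂ ∈ K2car := by
          intro b₁ b₂ h1 h2
          show ⁅π u, b₁ * b₂⁆ ∈ V
          have e : ⁅π u, b₁*b₂⁆ = ⁅π u,b₁⁆ * (b₁ * ⁅π u,b₂⁆ * b₁⁻¹) := comm_mul_right _ _ _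
          rw [e, central_conj (hcen b₂) b₁]
          exact Subgroup.mul_mem _ h1 h2
        have h2inv : ∀ b, b ∈ K2car → b⁻¹ ∈ K2car := by
          intro b hb
          show ⁅π u, b⁻¹⁆ ∈ V
          have hcen' : ∀ z, ⁅π u, b⁆⁻¹ * z = z * ⁅π u, b⁆⁻¹ := by
            intro z
            have := hcen b z
            calc ⁅π u,b⁆⁻¹ * z = ⁅π u,b⁆⁻¹ * z * ⁅π u,b⁆ * ⁅π u,b⁆⁻¹ := by group
            _ = ⁅π u,b⁆⁻¹ * ⁅π u,b⁆ * z * ⁅π u,b⁆⁻¹ := by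
                  rw [mul_assoc ⁅π u,b⁆⁻¹ z ⁅π u,b⁆, ← this, ← mul_assoc]
            _ = z * ⁅π u,b⁆⁻¹ := by group
          have e : ⁅π u, b⁻¹⁆ = b⁻¹ * ⁅π u,b⁆⁻¹ * b := comm_inv_right _ _
          have e2 : b⁻¹ * ⁅π u,b⁆⁻¹ * b = ⁅π u,b⁆⁻¹ := by
            have := central_conj hcen' b⁻¹; exact (by group : b⁻¹ * ⁅π u,b⁆⁻¹ * b = b⁻¹ * ⁅π u,b⁆⁻¹ * b⁻¹⁻¹).trans this
          rw [e, e2]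
          exact Subgroup.inv_mem _ hb
        let K2 : Subgroup (G ⧸ N) :=
          { carrier := K2car, one_mem' := h2one, mul_mem' := fun {a b} ha hb => h2mul a b ha hb,
            inv_mem' := fun {a} ha => h2inv a ha }
        have hK2top : K2 = ⊤ := by
          rw [eq_top_iff, ← Subgroup.map_top_of_surjective π hπsurj]
          refine le_trans (Subgroup.map_mono hS.ge) ?_
          rw [MonoidHom.map_closure]
          apply Subgroup.closure_le K2 |>.mpr
          rintro b ⟨s, hs, rfl⟩
          show ⁅π u, π s⁆ ∈ V
          rw [← map_commutatorElement]
          exact Subgroup.subset_closure ⟨⁅u, s⁆, ⟨u, hu, s, hs, rfl⟩, rfl⟩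
        intro b
        refine ⟨?_, hcen b⟩
        have : b ∈ K2 := hK2top ▸ Subgroup.mem_top b
        exact this
      -- elements of π(lcs (n+1)) are in K
      have hgen2 : ∀ u ∈ lcsT G (n+1), π u ∈ K := by
        intro u hu b
        obtain ⟨z, rfl⟩ := hπsurj b
        have h1 : ⁅u, z⁆ ∈ N := Subgroup.commutator_mem_commutator hu (Subgroup.mem_top z)
        have h2 : ⁅π u, π z⁆ = 1 := by rw [← map_commutatorElement]; exact hker _ h1
        rw [h2]; exact ⟨Subgroup.one_mem V, fun z => by group⟩
      -- now π x ∈ K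
      have hx' : π x ∈ K := by
        have hx2 : π x ∈ Subgroup.map π (Subgroup.closure (Cset S n) ⊔ lcsT G (n+1)) :=
          Subgroup.mem_map_of_mem π (ih hx)
        rw [Subgroup.map_sup, MonoidHom.map_closure] at hx2
        have hle : Subgroup.closure (π '' Cset S n) ⊔
            Subgroup.map π (lcsT G (n+1)) ≤ K := by
          apply sup_le
          · apply (Subgroup.closure_le K).mpr
            rintro b ⟨u, hu, rfl⟩
            exact hgen1 u hu
          · rintro b ⟨u, hu, rfl⟩
            exact hgen2 u hu
        exact hle hx2
      rw [← map_commutatorElement]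
      exact (hx' (π y)).1
end SpanSec

section FoldSec
variable {Q : Type*} [Group Q] {k : ℕ}

def Pstep (db : Fin k → (Q →* Q)) (α : Fin k) (q : Q) : Q := q * (db α q)⁻¹

def Pfold (db : Fin k → (Q →* Q)) (L : List (Fin k)) (q : Q) : Q := L.foldr (Pstep db) q

variable (db : Fin k → (Q →* Q)) (V : Subgroup Q)
  (hdV : ∀ (α : Fin k), ∀ a ∈ V, db α a ∈ V)
  (hcommV : ∀ a ∈ V, ∀ b ∈ V, a * b = b * a)
  (hdbcomm : ∀ α β q, db α (db β q) = db β (db α q))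

theorem Pstep_one (α : Fin k) : Pstep db α 1 = 1 := by simp [Pstep]

theorem Pfold_one (L : List (Fin k)) : Pfold db L 1 = 1 := by
  induction L with
  | nil => rfl
  | cons β L ih => show Pstep db β (Pfold db L 1) = 1; rw [ih, Pstep_one]

include hdV in
theorem Pstep_memV (α : Fin k) : ∀ a ∈ V, Pstep db α a ∈ V := by
  intro a ha
  exact Subgroup.mul_mem _ ha (Subgroup.inv_mem _ (hdV α a ha))

include hdV in
theorem Pfold_memV (L : List (Fin k)) : ∀ a ∈ V, Pfold db L a ∈ V := by
  induction L with
  | nil => intro a ha; exact ha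
  | cons β L ih => intro a ha; exact Pstep_memV db V hdV β _ (ih a ha)

include hdV hcommV in
theorem Pstep_mul (α : Fin k) : ∀ a ∈ V, ∀ b ∈ V, Pstep db α (a*b) = Pstep db α a * Pstep db α b := by
  intro a ha b hb
  show (a*b) * (db α (a*b))⁻¹ = (a * (db α a)⁻¹) * (b * (db α b)⁻¹)
  rw [map_mul, mul_inv_rev]
  set u := db α a with hu
  set w := db α b with hw
  have c_ub : Commute u b := hcommV _ (hdV α a ha) _ hb
  have c_wu : Commute w u := hcommV _ (hdV α b hb) _ (hdV α a ha)
  have key : (b * w⁻¹) * u⁻¹ = u⁻¹ * (b * w⁻¹) :=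
    ((c_ub.symm.inv_right).mul_left (c_wu.inv_inv)).eq
  calc a * b * (w⁻¹ * u⁻¹) = a * ((b * w⁻¹) * u⁻¹) := by group
    _ = a * (u⁻¹ * (b * w⁻¹)) := by rw [key]
    _ = a * u⁻¹ * (b * w⁻¹) := by group

include hdV hcommV in
theorem Pfold_mul (L : List (Fin k)) : ∀ a ∈ V, ∀ b ∈ V,
    Pfold db L (a*b) = Pfold db L a * Pfold db L b := by
  induction L with
  | nil => intro a _ b _; rfl
  | cons β L ih =>
      intro a ha b hb
      show Pstep db β (Pfold db L (a*b)) = Pstep db β (Pfold db L a) * Pstep db β (Pfold db L b)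
      rw [ih a ha b hb]
      exact Pstep_mul db V hdV hcommV β _ (Pfold_memV db V hdV L a ha) _ (Pfold_memV db V hdV L b hb)

include hdV hcommV in
theorem Pfold_inv (L : List (Fin k)) : ∀ a ∈ V, Pfold db L a⁻¹ = (Pfold db L a)⁻¹ := by
  intro a ha
  have h2 : Pfold db L a * Pfold db L a⁻¹ = 1 := by
    rw [← Pfold_mul db V hdV hcommV L a ha a⁻¹ (Subgroup.inv_mem _ ha), mul_inv_cancel, Pfold_one]
  exact (mul_eq_one_iff_inv_eq.mp h2).symm

include hdbcomm in
theorem Pstep_fix {α β : Fin k} {a : Q} (hfix : db α a = a) : db α (Pstep db β a) = Pstep db β a := by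
  show db α (a * (db β a)⁻¹) = a * (db β a)⁻¹
  rw [map_mul, map_inv, hdbcomm, hfix]

include hdbcomm in
theorem Pfold_fix (L : List (Fin k)) {α : Fin k} {a : Q} (hfix : db α a = a) :
    db α (Pfold db L a) = Pfold db L a := by
  induction L with
  | nil => exact hfix
  | cons β L ih => exact Pstep_fix db hdbcomm ih

include hdbcomm in
theorem Pfold_kill (L : List (Fin k)) {α : Fin k} (hα : α ∈ L) {a : Q} (hfix : db α a = a) :
    Pfold db L a = 1 := by
  induction L with
  | nil => cases hα
  | cons β L ih =>
      rcases List.mem_cons.mp hα with h | h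
      · subst h
        show Pstep db α (Pfold db L a) = 1
        rw [Pstep, Pfold_fix db hdbcomm L hfix, mul_inv_cancel]
      · show Pstep db β (Pfold db L a) = 1
        rw [ih h, Pstep_one]

theorem Pfold_id (L : List (Fin k)) {a : Q} (h : ∀ α, db α a = 1) : Pfold db L a = a := by
  induction L with
  | nil => rfl
  | cons β L ih => show Pstep db β (Pfold db L a) = a; rw [ih, Pstep, h, inv_one, mul_one]

end FoldSec

section EstarSec
variable {G : Type*} [Group G]

theorem Estar (c : ℕ) (hc : lcsT G c = ⊥)
    (S : Set G) (hS : Subgroup.closure S = ⊤) (d : Fin (c+1) → (G →* G))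
    (hdcomm : ∀ α β x, d α (d β x) = d β (d α x))
    (hfix : ∀ s ∈ S, ∀ α, d α s = s ∨ d α s = 1)
    (hone : ∀ s ∈ S, ∀ α β, d α s ≠ s → d β s ≠ s → α = β)
    (x : G) (hx : ∀ α, d α x = 1) : x = 1 := by
  -- support lemma for Cset
  have base_supp : ∀ s ∈ S, ∃ T : Finset (Fin (c+1)), T.card ≤ 1 ∧ ∀ α ∉ T, d α s = s := by
    intro s hs
    by_cases hall : ∀ α, d α s = s
    · exact ⟨∅, by simp, fun α _ => hall α⟩
    · push_neg at hall
      obtain ⟨α₀, hα₀⟩ := hall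
      refine ⟨{α₀}, by simp, fun α hα => ?_⟩
      rcases hfix s hs α with h | h
      · exact h
      · by_cases hss : d α s = s
        · exact hss
        · exact absurd (hone s hs α α₀ hss hα₀) (by simpa using hα)
  have Csupp : ∀ n, ∀ u ∈ Cset S n, ∃ T : Finset (Fin (c+1)), T.card ≤ n + 1 ∧
      ∀ α ∉ T, d α u = u := by
    intro n
    induction n with
    | zero => exact base_supp
    | succ n ih =>
        rintro u ⟨w, hw, s, hs, rfl⟩
        obtain ⟨Tw, hTw, hTwf⟩ := ih w hw
        obtain ⟨Ts, hTs, hTsf⟩ := base_supp s hs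
        refine ⟨Tw ∪ Ts, le_trans (Finset.card_union_le _ _) (by omega), fun α hα => ?_⟩
        rw [Finset.mem_union] at hα
        push_neg at hα
        rw [map_commutatorElement, hTwf α hα.1, hTsf α hα.2]
  have Cfixkill : ∀ n, ∀ u ∈ Cset S n, ∀ α, d α u = u ∨ d α u = 1 := by
    intro n
    induction n with
    | zero => exact hfix
    | succ n ih =>
        rintro u ⟨w, hw, s, hs, rfl⟩ α
        rw [map_commutatorElement]
        rcases ih w hw α with h1 | h1 <;> rcases hfix s hs α with h2 | h2 <;> rw [h1, h2]
        · exact Or.inl rfl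
        · exact Or.inr (by simp [commutatorElement_def])
        · exact Or.inr (by simp [commutatorElement_def])
        · exact Or.inr (by simp [commutatorElement_def])
  -- main induction on lower central series
  have main : ∀ j, j ≤ c → x ∈ lcsT G j := by
    intro j
    induction j with
    | zero => intro _; exact Subgroup.mem_top x
    | succ j ih =>
        intro hj
        have hxj : x ∈ lcsT G j := ih (by omega)
        set N := lcsT G (j+1) with hNdef
        let π : G →* G ⧸ N := QuotientGroup.mk' N
        have hπsurj : Function.Surjective π := QuotientGroup.mk'_surjective N
        have hdN : ∀ α, N ≤ Subgroup.comap (d α) N := by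
          intro α z hz
          exact lcs_map_mem (d α) (j+1) hz
        let db : Fin (c+1) → (G ⧸ N →* G ⧸ N) := fun α => QuotientGroup.map N N (d α) (hdN α)
        have db_mk : ∀ α (z : G), db α (π z) = π (d α z) := by
          intro α z; rfl
        have hdbcomm : ∀ α β q, db α (db β q) = db β (db α q) := by
          intro α β q
          obtain ⟨z, rfl⟩ := hπsurj q
          rw [db_mk, db_mk, db_mk, db_mk, hdcomm]
        set Ebar : Set (G ⧸ N) := π '' Cset S j with hEbar
        set V : Subgroup (G ⧸ N) := Subgroup.closure Ebar with hV
        have hVle : V ≤ Subgroup.map π (lcsT G j) := by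
          apply (Subgroup.closure_le _).mpr
          rintro b ⟨u, hu, rfl⟩
          exact ⟨u, Cset_sub_lcs S j u hu, rfl⟩
        have hcommV : ∀ a ∈ V, ∀ b ∈ V, a * b = b * a := by
          intro a ha b hb
          obtain ⟨ua, hua, rfl⟩ := hVle ha
          obtain ⟨ub, hub, rfl⟩ := hVle hb
          have h1 : ⁅ua, ub⁆ ∈ N := Subgroup.commutator_mem_commutator hua (Subgroup.mem_top ub)
          have h2 : ⁅π ua, π ub⁆ = 1 := by
            rw [← map_commutatorElement]
            exact (QuotientGroup.eq_one_iff _).mpr h1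
          exact commutatorElement_eq_one_iff_mul_comm.mp h2
        have hdV : ∀ α, ∀ a ∈ V, db α a ∈ V := by
          intro α a ha
          refine Subgroup.closure_induction ?_ ?_ ?_ ?_ ha
          · rintro b ⟨u, hu, rfl⟩
            rcases Cfixkill j u hu α with h | h
            · rw [db_mk, h]; exact Subgroup.subset_closure ⟨u, hu, rfl⟩
            · rw [db_mk, h, map_one]; exact Subgroup.one_mem V
          · rw [map_one]; exact Subgroup.one_mem V
          · intro y z _ _ hy hz; rw [map_mul]; exact Subgroup.mul_mem _ hy hz
          · intro y _ hy; rw [map_inv]; exact Subgroup.inv_mem _ hy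
        -- π x ∈ V
        have hxV : π x ∈ V := by
          have h1 : π x ∈ Subgroup.map π (lcsT G j) := ⟨x, hxj, rfl⟩
          have h2 : Subgroup.map π (lcsT G j) ≤ V := by
            have h3 := span_lemma S hS j
            have h4 : Subgroup.map π (lcsT G j) ≤
                Subgroup.map π (Subgroup.closure (Cset S j) ⊔ lcsT G (j+1)) :=
              Subgroup.map_mono h3
            rw [Subgroup.map_sup, MonoidHom.map_closure] at h4
            have h5 : Subgroup.map π (lcsT G (j+1)) = ⊥ := by
              rw [eq_bot_iff]
              rintro b ⟨u, hu, rfl⟩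
              exact (QuotientGroup.eq_one_iff _).mpr hu
            rw [h5, sup_bot_eq] at h4
            exact h4
          exact h2 h1
        have hdbx : ∀ α, db α (π x) = 1 := by
          intro α
          rw [db_mk, hx, map_one]
        -- fold argument
        set L₀ : List (Fin (c+1)) := Finset.univ.toList with hL₀
        have hvanish : ∀ a, a ∈ V → Pfold db L₀ a = 1 := by
          intro a ha
          refine Subgroup.closure_induction ?_ ?_ ?_ ?_ ha
          · rintro b ⟨u, hu, rfl⟩
            obtain ⟨T, hTc, hTf⟩ := Csupp j u hu
            have hsmall : T.card < Finset.univ.card (α := Fin (c+1)) := by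
              rw [Finset.card_univ, Fintype.card_fin]
              omega
            obtain ⟨α₀, hα₀⟩ : ∃ α₀, α₀ ∉ T := by
              by_contra hcon
              push_neg at hcon
              have hsub : Finset.univ ⊆ T := fun a _ => hcon a
              have := Finset.card_le_card hsub
              omega
            have hfix0 : db α₀ (π u) = π u := by rw [db_mk, hTf α₀ hα₀]
            exact Pfold_kill db hdbcomm L₀ (by simp [hL₀]) hfix0
          · exact Pfold_one db L₀
          · intro y z hy hz hy1 hz1
            rw [Pfold_mul db V hdV hcommV L₀ y hy z hz, hy1, hz1, one_mul]
          · intro y hy hy1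
            rw [Pfold_inv db V hdV hcommV L₀ y hy, hy1, inv_one]
        have hid : Pfold db L₀ (π x) = π x := Pfold_id db L₀ hdbx
        have : π x = 1 := by rw [← hid]; exact hvanish _ hxV
        exact (QuotientGroup.eq_one_iff x).mp this
  have := main c le_rfl
  rw [hc] at this
  exact Subgroup.mem_bot.mp this
end EstarSec

section ClaimSSec
variable {A : Type*} [Group A]

/-- Variable index type: `r` main slots plus `c+1` blocks of `m` free slots. -/
abbrev Ity (c m r : ℕ) := Fin r ⊕ Fin (c+1) × Fin m
/-- Extended index type with perturbation letters. -/
abbrev Jty (c m r : ℕ) := Ity c m r ⊕ Fin (c+1) × Fin m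

def iotaMap (c m r : ℕ) : FreeGroup (Ity c m r) →* FreeGroup (Jty c m r) :=
  FreeGroup.lift (fun i => match i with
    | Sum.inl j => FreeGroup.of (Sum.inl (Sum.inl j))
    | Sum.inr p => FreeGroup.of (Sum.inl (Sum.inr p)) * FreeGroup.of (Sum.inr p))

def delE (c m r : ℕ) (Efs : Finset (Fin (c+1))) :
    FreeGroup (Jty c m r) →* FreeGroup (Jty c m r) :=
  FreeGroup.lift (fun jl => match jl with
    | Sum.inl i => FreeGroup.of (Sum.inl i)
    | Sum.inr p => if p.1 ∈ Efs then 1 else FreeGroup.of (Sum.inr p))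

theorem delE_comp (c m r : ℕ) (E1 E2 : Finset (Fin (c+1))) :
    (delE c m r E1).comp (delE c m r E2) = delE c m r (E1 ∪ E2) := by
  apply FreeGroup.ext_hom; intro jl
  cases jl with
  | inl i => simp [delE]
  | inr p =>
      by_cases h2 : p.1 ∈ E2 <;> by_cases h1 : p.1 ∈ E1 <;>
        simp [delE, h1, h2]

theorem delE_apply_apply (c m r : ℕ) (E1 E2 : Finset (Fin (c+1))) (z : FreeGroup (Jty c m r)) :
    delE c m r E1 (delE c m r E2 z) = delE c m r (E1 ∪ E2) z :=
  DFunLike.congr_fun (delE_comp c m r E1 E2) z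

theorem delE_empty (c m r : ℕ) (z : FreeGroup (Jty c m r)) : delE c m r ∅ z = z := by
  have : delE c m r ∅ = MonoidHom.id _ := by
    apply FreeGroup.ext_hom; intro jl
    cases jl with
    | inl i => simp [delE]
    | inr p => simp [delE]
  rw [this]; rfl

def pertTup (c m r : ℕ) (g : Fin m → A) (w : Fin r → A) (Efs : Finset (Fin (c+1))) :
    Ity c m r → A :=
  fun i => match i with
    | Sum.inl j => w j
    | Sum.inr p => if p.1 ∈ Efs then 1 else g p.2

def evalJ (c m r : ℕ) (g : Fin m → A) (x : Ity c m r → A) : FreeGroup (Jty c m r) →* A :=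
  FreeGroup.lift (fun jl => match jl with
    | Sum.inl i => x i
    | Sum.inr p => g p.2)

theorem evalJ_delE_iota (c m r : ℕ) (g : Fin m → A) (w : Fin r → A) (Efs : Finset (Fin (c+1))) :
    (evalJ c m r g (Sum.elim w fun _ => (1:A))).comp ((delE c m r Efs).comp (iotaMap c m r))
      = FreeGroup.lift (pertTup c m r g w Efs) := by
  apply FreeGroup.ext_hom; intro i
  cases i with
  | inl j => simp [evalJ, delE, iotaMap, pertTup]
  | inr p => by_cases h : p.1 ∈ Efs <;> simp [evalJ, delE, iotaMap, pertTup, h]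

theorem pertTup_univ (c m r : ℕ) (g : Fin m → A) (w : Fin r → A) :
    pertTup c m r g w Finset.univ = Sum.elim w (fun _ => (1:A)) := by
  funext i
  cases i with
  | inl j => rfl
  | inr p => simp [pertTup]

theorem pertTup_gen (c m r : ℕ) (g : Fin m → A) (hg : Subgroup.closure (Set.range g) = ⊤)
    (w : Fin r → A) (Efs : Finset (Fin (c+1))) (hE : Efs ≠ Finset.univ) :
    Subgroup.closure (Set.range (pertTup c m r g w Efs)) = ⊤ := by
  obtain ⟨α₀, hα₀⟩ : ∃ α₀, α₀ ∉ Efs := by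
    by_contra hcon
    push_neg at hcon
    exact hE (Finset.eq_univ_iff_forall.mpr hcon)
  apply top_unique
  rw [← hg]
  apply Subgroup.closure_mono
  rintro a ⟨t, rfl⟩
  exact ⟨Sum.inr (α₀, t), by simp [pertTup, hα₀]⟩

end ClaimSSec

section AllEvalSec
variable {A : Type*} [Group A]

theorem allEval_of_delKill (c m r : ℕ) (hc : lcsT A c = ⊥)
    (η : FreeGroup (Jty c m r))
    (hkill : ∀ α : Fin (c+1), delE c m r {α} η = 1) :
    ∀ f : Jty c m r → A, FreeGroup.lift f η = 1 := by
  classical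
  set Ψ : FreeGroup (Jty c m r) →* ((Jty c m r → A) → A) :=
    FreeGroup.lift (fun jl => (fun f : Jty c m r → A => f jl)) with hΨdef
  have hΨeval : ∀ f : Jty c m r → A,
      (Pi.evalMonoidHom (fun _ : Jty c m r → A => A) f).comp Ψ = FreeGroup.lift f := by
    intro f
    apply FreeGroup.ext_hom; intro jl
    simp [hΨdef, Pi.evalMonoidHom]
  have hΨeval' : ∀ (f : Jty c m r → A) (z : FreeGroup (Jty c m r)),
      FreeGroup.lift f z = Ψ z f := by
    intro f z
    exact (DFunLike.congr_fun (hΨeval f) z).symm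
  suffices hη : Ψ η = 1 by
    intro f
    rw [hΨeval' f η, hη]
    rfl
  set KK := Ψ.ker with hKK
  have hprune : ∀ (Efs : Finset (Fin (c+1))) (f : Jty c m r → A),
      (FreeGroup.lift f).comp (delE c m r Efs) = FreeGroup.lift (fun jl => match jl with
        | Sum.inl i => f (Sum.inl i)
        | Sum.inr p => if p.1 ∈ Efs then 1 else f (Sum.inr p)) := by
    intro Efs f
    apply FreeGroup.ext_hom; intro jl
    cases jl with
    | inl i => simp [delE]
    | inr p => by_cases h : p.1 ∈ Efs <;> simp [delE, h]
  have hcomap : ∀ Efs : Finset (Fin (c+1)), KK ≤ Subgroup.comap (delE c m r Efs) KK := by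
    intro Efs z hz
    have hz1 : Ψ z = 1 := hz
    show Ψ (delE c m r Efs z) = 1
    funext f
    have h1 : FreeGroup.lift f (delE c m r Efs z) = 1 := by
      have h2 := DFunLike.congr_fun (hprune Efs f) z
      rw [MonoidHom.comp_apply] at h2
      rw [h2, hΨeval', hz1]
      rfl
    rw [← hΨeval' f, h1]
    rfl
  set dbar : Fin (c+1) → ((FreeGroup (Jty c m r) ⧸ KK) →* (FreeGroup (Jty c m r) ⧸ KK)) :=
    fun α => QuotientGroup.map KK KK (delE c m r {α}) (hcomap {α}) with hdbar
  set πR : FreeGroup (Jty c m r) →* FreeGroup (Jty c m r) ⧸ KK := QuotientGroup.mk' KK with hπR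
  have hπRsurj : Function.Surjective πR := QuotientGroup.mk'_surjective KK
  have dbar_mk : ∀ (α : Fin (c+1)) (z : FreeGroup (Jty c m r)),
      dbar α (πR z) = πR (delE c m r {α} z) := by
    intro α z
    simp [hdbar, hπR, QuotientGroup.map_mk']
  -- nilpotency of the quotient
  have hlcsR : lcsT (FreeGroup (Jty c m r) ⧸ KK) c = ⊥ := by
    rw [eq_bot_iff]
    intro z hz
    have h1 : QuotientGroup.kerLift Ψ z ∈
        lcsT ((Jty c m r → A) → A) c := lcs_map_mem _ c hz
    have h2 := Subgroup.top_lowerCentralSeries_pi_le (n := c) h1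
    rw [Subgroup.mem_bot]
    apply QuotientGroup.kerLift_injective Ψ
    rw [map_one]
    funext f
    have h3 : (QuotientGroup.kerLift Ψ z) f ∈ lcsT A c :=
      (Subgroup.mem_pi Set.univ).mp h2 f (Set.mem_univ f)
    rw [hc, Subgroup.mem_bot] at h3
    rw [h3]
    rfl
  -- generating set
  set S_R : Set (FreeGroup (Jty c m r) ⧸ KK) :=
    Set.range (fun jl : Jty c m r => πR (FreeGroup.of jl)) with hS_Rdef
  have hS_R : Subgroup.closure S_R = ⊤ := by
    have h1 : S_R = πR '' (Set.range FreeGroup.of) := by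
      rw [← Set.range_comp]
      rfl
    rw [h1, ← MonoidHom.map_closure, FreeGroup.closure_range_of,
      Subgroup.map_top_of_surjective πR hπRsurj]
  have hdbarcomm : ∀ α β q, dbar α (dbar β q) = dbar β (dbar α q) := by
    intro α β q
    obtain ⟨z, rfl⟩ := hπRsurj q
    rw [dbar_mk, dbar_mk, dbar_mk, dbar_mk, delE_apply_apply, delE_apply_apply,
      Finset.union_comm]
  have hdel_inl : ∀ (α : Fin (c+1)) (i : Ity c m r),
      delE c m r {α} (FreeGroup.of (Sum.inl i)) = FreeGroup.of (Sum.inl i) := by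
    intro α i; simp [delE]
  have hdel_inr_ne : ∀ (α : Fin (c+1)) (p : Fin (c+1) × Fin m), p.1 ≠ α →
      delE c m r {α} (FreeGroup.of (Sum.inr p)) = FreeGroup.of (Sum.inr p) := by
    intro α p hp; simp [delE, hp]
  have hdel_inr_eq : ∀ (α : Fin (c+1)) (p : Fin (c+1) × Fin m), p.1 = α →
      delE c m r {α} (FreeGroup.of (Sum.inr p)) = 1 := by
    intro α p hp; simp [delE, hp]
  have hfixR : ∀ s ∈ S_R, ∀ α, dbar α s = s ∨ dbar α s = 1 := by
    rintro s ⟨jl, rfl⟩ α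
    cases jl with
    | inl i =>
        left
        rw [dbar_mk, hdel_inl]
    | inr p =>
        by_cases h : p.1 = α
        · right
          rw [dbar_mk, hdel_inr_eq α p h, map_one]
        · left
          rw [dbar_mk, hdel_inr_ne α p h]
  have honeR : ∀ s ∈ S_R, ∀ α β, dbar α s ≠ s → dbar β s ≠ s → α = β := by
    rintro s ⟨jl, rfl⟩ α β hα hβ
    cases jl with
    | inl i =>
        exact absurd (by rw [dbar_mk, hdel_inl]) hα
    | inr p =>
        have h1 : α = p.1 := by
          by_contra hne
          exact hα (by rw [dbar_mk, hdel_inr_ne α p (fun h => hne h.symm)])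
        have h2 : β = p.1 := by
          by_contra hne
          exact hβ (by rw [dbar_mk, hdel_inr_ne β p (fun h => hne h.symm)])
        rw [h1, h2]
  have hkillR : ∀ α, dbar α (πR η) = 1 := by
    intro α
    rw [dbar_mk, hkill α, map_one]
  have hfinal : πR η = 1 :=
    Estar c hlcsR S_R hS_R dbar hdbarcomm hfixR honeR (πR η) hkillR
  exact (QuotientGroup.eq_one_iff η).mp hfinal

end AllEvalSec

section ClaimSTheorem
variable {A : Type*} [Group A]

theorem claimS (c m r : ℕ) (hc : lcsT A c = ⊥)
    (g : Fin m → A) (hg : Subgroup.closure (Set.range g) = ⊤)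
    (w : Fin r → A)
    (θ : FreeGroup (Ity c m r))
    (hvan : ∀ u : Ity c m r → A, Subgroup.closure (Set.range u) = ⊤ →
      FreeGroup.lift u θ = 1) :
    FreeGroup.lift (Sum.elim w fun _ => (1:A)) θ = 1 := by
  classical
  set L : A := FreeGroup.lift (Sum.elim w fun _ => (1:A)) θ with hL
  set κ : ℕ → FreeGroup (Jty c m r) := fun t => Nat.rec (iotaMap c m r θ)
    (fun t prev => if h : t < c+1 then (delE c m r {⟨t, h⟩} prev)⁻¹ * prev else prev) t with hκ
  have κ_zero : κ 0 = iotaMap c m r θ := rfl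
  have κ_succ : ∀ t (h : t < c+1), κ (t+1) = (delE c m r {⟨t, h⟩} (κ t))⁻¹ * κ t := by
    intro t h
    show (if h : t < c+1 then (delE c m r {⟨t, h⟩} (κ t))⁻¹ * (κ t) else (κ t)) = _
    rw [dif_pos h]
  have κ_succ' : ∀ t, ¬ (t < c+1) → κ (t+1) = κ t := by
    intro t h
    show (if h : t < c+1 then (delE c m r {⟨t, h⟩} (κ t))⁻¹ * (κ t) else (κ t)) = _
    rw [dif_neg h]
  have base_val : ∀ Efs : Finset (Fin (c+1)),
      evalJ c m r g (Sum.elim w fun _ => (1:A)) (delE c m r Efs (κ 0))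
        = if Efs = Finset.univ then L else 1 := by
    intro Efs
    have hbe : evalJ c m r g (Sum.elim w fun _ => (1:A)) (delE c m r Efs (κ 0))
        = FreeGroup.lift (pertTup c m r g w Efs) θ := by
      rw [κ_zero]
      simpa using DFunLike.congr_fun (evalJ_delE_iota c m r g w Efs) θ
    rw [hbe]
    by_cases h : Efs = Finset.univ
    · rw [if_pos h, h, pertTup_univ, hL]
    · rw [if_neg h]
      exact hvan _ (pertTup_gen c m r g hg w Efs h)
  set sgn : ℕ → A := fun t => if Even t then L else L⁻¹ with hsgn
  set Flt : ℕ → Finset (Fin (c+1)) :=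
    fun t => Finset.univ.filter (fun β => t ≤ (β : Fin (c+1)).val) with hFlt
  have mem_Flt : ∀ t (β : Fin (c+1)), β ∈ Flt t ↔ t ≤ β.val := by
    intro t β; simp [hFlt]
  have Flt_zero : Flt 0 = Finset.univ := by
    ext β; simp [hFlt]
  have Flt_last : Flt (c+1) = ∅ := by
    ext β
    simp only [mem_Flt, Finset.notMem_empty, iff_false, not_le]
    exact β.isLt
  have vclaim : ∀ t, t ≤ c+1 → ∀ Efs : Finset (Fin (c+1)), (∀ β ∈ Efs, t ≤ β.val) →
      evalJ c m r g (Sum.elim w fun _ => (1:A)) (delE c m r Efs (κ t))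
        = if Efs = Flt t then sgn t else 1 := by
    intro t
    induction t with
    | zero =>
        intro _ Efs _
        rw [base_val Efs, Flt_zero]
        by_cases h : Efs = Finset.univ <;> simp [h, hsgn]
    | succ t ih =>
        intro ht Efs hEfs
        have ht' : t < c+1 := by omega
        set tF : Fin (c+1) := ⟨t, ht'⟩ with htF
        have htFE : tF ∉ Efs := by
          intro hmem
          have := hEfs tF hmem
          simp [htF] at this
        have hrec1 := ih (by omega) (Efs ∪ {tF}) (by
          intro β hβ
          rcases Finset.mem_union.mp hβ with h | h
          · exact le_trans (by omega) (hEfs β h)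
          · rw [Finset.mem_singleton] at h
            rw [h])
        have hrec2 := ih (by omega) Efs (fun β hβ => le_trans (by omega) (hEfs β hβ))
        rw [κ_succ t ht', map_mul, map_inv, delE_apply_apply, map_mul, map_inv, hrec1, hrec2]
        by_cases hcase : Efs = Flt (t+1)
        · have hu : Efs ∪ {tF} = Flt t := by
            ext β
            rw [Finset.mem_union, Finset.mem_singleton, mem_Flt, hcase, mem_Flt]
            constructor
            · rintro (h | h)
              · omega
              · rw [h]
            · intro h
              by_cases hb : β = tF
              · exact Or.inr hb
              · left
                have : β.val ≠ t := fun hv => hb (Fin.ext hv)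
                omega
          have hne2 : Efs ≠ Flt t := by
            intro h
            apply htFE
            rw [h, mem_Flt]
          rw [if_pos hu, if_neg hne2, if_pos hcase, mul_one]
          by_cases he : Even t
          · have ho : ¬ Even (t+1) := by simp [Nat.even_add_one, he]
            simp [hsgn, he, ho]
          · have ho : Even (t+1) := by simp [Nat.even_add_one, he]
            simp [hsgn, he, ho]
        · have hne1 : Efs ∪ {tF} ≠ Flt t := by
            intro hu
            apply hcase
            ext β
            rw [mem_Flt]
            constructor
            · intro hβ
              have := hEfs β hβ
              omega
            · intro hβ
              have hβ' : β ∈ Efs ∪ {tF} := by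
                rw [hu, mem_Flt]
                omega
              rcases Finset.mem_union.mp hβ' with h | h
              · exact h
              · rw [Finset.mem_singleton] at h
                exfalso
                rw [h] at hβ
                simp [htF] at hβ
          have hne2 : Efs ≠ Flt t := by
            intro h
            apply htFE
            rw [h, mem_Flt]
          rw [if_neg hne1, if_neg hne2, if_neg hcase, inv_one, one_mul]
  have kclaim : ∀ t, ∀ β : Fin (c+1), β.val < t → delE c m r {β} (κ t) = 1 := by
    intro t
    induction t with
    | zero => intro β h; omega
    | succ t ih =>
        intro β hβ
        by_cases h : t < c+1
        · rw [κ_succ t h, map_mul, map_inv, delE_apply_apply]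
          by_cases hbt : β.val = t
          · have hβt : β = ⟨t, h⟩ := Fin.ext hbt
            rw [← hβt, Finset.union_self]
            exact inv_mul_cancel _
          · have hlt : β.val < t := by omega
            have h1 : delE c m r ({β} ∪ {⟨t,h⟩}) (κ t) = 1 := by
              rw [Finset.union_comm, ← delE_apply_apply c m r {⟨t,h⟩} {β} (κ t), ih β hlt, map_one]
            rw [ih β hlt, h1, inv_one, one_mul]
        · rw [κ_succ' t h]
          exact ih β (by omega)
  have hkillall : ∀ α : Fin (c+1), delE c m r {α} (κ (c+1)) = 1 :=
    fun α => kclaim (c+1) α α.isLt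
  have hall := allEval_of_delKill c m r hc (κ (c+1)) hkillall
  have h1 : evalJ c m r g (Sum.elim w fun _ => (1:A)) (κ (c+1)) = 1 := hall _
  have h2 := vclaim (c+1) le_rfl ∅ (by simp)
  rw [delE_empty c m r (κ (c+1)), h1, if_pos Flt_last.symm] at h2
  by_cases he : Even (c+1)
  · rw [hsgn] at h2
    simp only [he, if_true] at h2
    exact h2.symm
  · rw [hsgn] at h2
    simp only [he, if_false] at h2
    exact inv_eq_one.mp h2.symm
end ClaimSTheorem

/-- A formation of finite nilpotent groups is closed under subgroups.
`F` is a property of groups such that (i) every group with property `F` is finite and nilpotent,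
(ii) `F` is preserved by surjective homomorphic images, and (iii) `F` is preserved by finite
subdirect products. Then `F` is closed under subgroups. -/
theorem formation_of_finite_nilpotent_groups_is_hereditary
    (F : (G : Type u) → [inst : Group G] → Prop)
    (hfin : ∀ (G : Type u) [Group G], F G → Finite G ∧ Group.IsNilpotent G)
    (hquot : ∀ (G H : Type u) [Group G] [Group H] (f : G →* H),
      Function.Surjective f → F G → F H)
    (hsub : ∀ (n : ℕ), 0 < n → ∀ (G : Fin n → Type u) [∀ i, Group (G i)],
      (∀ i, F (G i)) → ∀ D : Subgroup (∀ i, G i),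
        (∀ (i : Fin n) (a : G i), ∃ d ∈ D, d i = a) → F D)
    (A : Type u) [Group A] (hAF : F A) (B : Subgroup A) :
    F B := by
  classical
  obtain ⟨hfinA, hnilA⟩ := hfin A hAF
  haveI := hfinA
  haveI := hnilA
  set c := Group.nilpotencyClass A with hcdef
  have hc : lcsT A c = ⊥ := _root_.lowerCentralSeries_nilpotencyClass
  obtain ⟨m, ⟨eA⟩⟩ := Finite.exists_equiv_fin A
  obtain ⟨r, ⟨eB⟩⟩ := Finite.exists_equiv_fin B
  set g : Fin m → A := fun i => eA.symm i with hgdef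
  have hg : Subgroup.closure (Set.range g) = ⊤ := by
    have h1 : Set.range g = Set.univ := eA.symm.surjective.range_eq
    rw [h1, Subgroup.closure_univ]
  set w : Fin r → A := fun i => ((eB.symm i : ↥B) : A) with hwdef
  have hwB : Subgroup.closure (Set.range w) = B := by
    have h1 : Set.range w = (B : Set A) := by
      ext a
      constructor
      · rintro ⟨i, rfl⟩
        exact (eB.symm i).2
      · intro ha
        refine ⟨eB ⟨a, ha⟩, ?_⟩
        rw [hwdef]
        simp
    rw [h1, Subgroup.closure_eq]
  set v : Ity c m r → A := Sum.elim w (fun _ => 1) with hv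
  haveI hTTfin : Finite {u : Ity c m r → A // Subgroup.closure (Set.range u) = ⊤} :=
    Subtype.finite
  haveI hTTne : Nonempty {u : Ity c m r → A // Subgroup.closure (Set.range u) = ⊤} := by
    refine ⟨⟨Sum.elim w (fun p => g p.2), ?_⟩⟩
    apply top_unique
    rw [← hg]
    apply Subgroup.closure_mono
    rintro a ⟨t, rfl⟩
    exact ⟨Sum.inr ((0 : Fin (c+1)), t), rfl⟩
  set n := Nat.card {u : Ity c m r → A // Subgroup.closure (Set.range u) = ⊤} with hn
  have hnpos : 0 < n := Nat.card_pos
  set eT := Finite.equivFin {u : Ity c m r → A // Subgroup.closure (Set.range u) = ⊤} with heT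
  set uk : Fin n → (Ity c m r → A) := fun k => (eT.symm k).1 with huk
  set E' : FreeGroup (Ity c m r) →* (∀ _ : Fin n, A) :=
    FreeGroup.lift (fun i => fun k => uk k i) with hE'
  have hprojE : ∀ (k : Fin n) (θ : FreeGroup (Ity c m r)),
      E' θ k = FreeGroup.lift (uk k) θ := by
    intro k θ
    have h0 : (Pi.evalMonoidHom (fun _ : Fin n => A) k).comp E' = FreeGroup.lift (uk k) := by
      apply FreeGroup.ext_hom
      intro i
      simp [hE', Pi.evalMonoidHom]
    exact DFunLike.congr_fun h0 θ
  have hDF : F ↥E'.range := by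
    apply hsub n hnpos (fun _ => A) (fun _ => hAF) E'.range
    intro k a
    have h1 : a ∈ (FreeGroup.lift (uk k)).range := by
      rw [FreeGroup.range_lift_eq_closure, (eT.symm k).2]
      exact Subgroup.mem_top a
    obtain ⟨θ, hθ⟩ := h1
    exact ⟨E' θ, ⟨θ, rfl⟩, by rw [hprojE k θ, hθ]⟩
  have hker : ∀ θ ∈ E'.ker, FreeGroup.lift v θ = 1 := by
    intro θ hθ
    rw [hv]
    apply claimS c m r hc g hg w θ
    intro u hu
    have h1 : FreeGroup.lift (uk (eT ⟨u, hu⟩)) θ = 1 := by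
      rw [← hprojE]
      rw [MonoidHom.mem_ker] at hθ
      rw [hθ]
      rfl
    have h2 : uk (eT ⟨u, hu⟩) = u := by
      simp [huk]
    rw [h2] at h1
    exact h1
  set q0 := QuotientGroup.lift E'.ker (FreeGroup.lift v) (fun θ hθ => hker θ hθ) with hq0
  set e1 := QuotientGroup.quotientKerEquivRange E' with he1
  set ψ : ↥E'.range →* A := q0.comp e1.symm.toMonoidHom with hψ
  have hψval : ∀ θ : FreeGroup (Ity c m r),
      ψ (e1 (QuotientGroup.mk θ)) = FreeGroup.lift v θ := by
    intro θ
    rw [hψ]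
    have h1 : e1.symm (e1 (QuotientGroup.mk θ)) = QuotientGroup.mk θ :=
      e1.symm_apply_apply _
    simp only [MonoidHom.comp_apply, MulEquiv.coe_toMonoidHom, h1]
    rw [hq0]
    rfl
  have hsurj1 : ∀ d : ↥E'.range, ∃ θ : FreeGroup (Ity c m r),
      e1 (QuotientGroup.mk θ) = d := by
    intro d
    obtain ⟨z, hz⟩ := e1.surjective d
    obtain ⟨θ, rfl⟩ := QuotientGroup.mk_surjective z
    exact ⟨θ, hz⟩
  have hrange : ∀ d : ↥E'.range, ψ d ∈ B := by
    intro d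
    obtain ⟨θ, rfl⟩ := hsurj1 d
    rw [hψval]
    have h1 : FreeGroup.lift v θ ∈ Subgroup.closure (Set.range v) := by
      rw [← FreeGroup.range_lift_eq_closure]
      exact ⟨θ, rfl⟩
    have h2 : Subgroup.closure (Set.range v) ≤ B := by
      apply (Subgroup.closure_le B).mpr
      rintro a ⟨i, rfl⟩
      cases i with
      | inl j => exact (eB.symm j).2
      | inr p =>
          show v (Sum.inr p) ∈ B
          rw [hv]
          exact B.one_mem
    exact h2 h1
  set Φ : ↥E'.range →* ↥B := ψ.codRestrict B hrange with hΦ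
  have hΦsurj : Function.Surjective Φ := by
    intro b
    have h1 : (b : A) ∈ Subgroup.closure (Set.range v) := by
      have h2 : B ≤ Subgroup.closure (Set.range v) := by
        rw [← hwB]
        apply Subgroup.closure_mono
        rintro a ⟨j, rfl⟩
        exact ⟨Sum.inl j, rfl⟩
      exact h2 b.2
    rw [← FreeGroup.range_lift_eq_closure] at h1
    obtain ⟨θ, hθ⟩ := h1
    refine ⟨e1 (QuotientGroup.mk θ), ?_⟩
    apply Subtype.ext
    show ψ _ = (b : A)
    rw [hψval, hθ]
  exact hquot (↥E'.range) (↥B) Φ hΦsurj hDF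
end

section
/- Let X be a finite nilpotent group, let m be a positive integer, let B be a subgroup of X^m, and let Y be a group that is a surjective homomorphic image of B. Then Y is a homomorphic image of a finite subdirect power of X: there exist a positive integer n, a subgroup D of X^n such that every coordinate projection D → X is surjective, and a surjective group homomorphism D → Y. -/
set_option linter.unusedSectionVars false

namespace SubdirectAux

open Subgroup
open scoped commutatorElement

variable {α : Type*} [DecidableEq α]

/-- The retraction of the free group killing the letter `z`. -/
def retr (z : α) : FreeGroup α →* FreeGroup α :=
  FreeGroup.lift (fun a => if a = z then 1 else FreeGroup.of a)

@[simp] lemma retr_of_self (z : α) : retr z (FreeGroup.of z) = 1 := by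
  simp [retr]

lemma retr_of_ne (z : α) {a : α} (h : a ≠ z) :
    retr z (FreeGroup.of a) = FreeGroup.of a := by
  simp [retr, h]

/-- Right-normed iterated commutators of letters. -/
def kap : α → List α → FreeGroup α
  | a, [] => FreeGroup.of a
  | a, b :: L => ⁅kap b L, FreeGroup.of a⁆

lemma kap_mem_lcs (a : α) (L : List α) :
    kap a L ∈ (⊤ : Subgroup (FreeGroup α)).lowerCentralSeries L.length := by
  induction L generalizing a with
  | nil => simp [kap]
  | cons b L ih =>
      rw [kap, List.length_cons, Subgroup.lowerCentralSeries_succ]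
      exact Subgroup.commutator_mem_commutator (ih b) (Subgroup.mem_top _)

lemma retr_kap_fix (z : α) (a : α) (L : List α) (h : z ∉ a :: L) :
    retr z (kap a L) = kap a L := by
  induction L generalizing a with
  | nil =>
      simp only [kap]
      exact retr_of_ne z (by simpa using fun h' => h (by simp [h']))
  | cons b L ih =>
      have hz1 : z ∉ b :: L := by
        intro hmem; exact h (List.mem_cons_of_mem _ hmem)
      have hz2 : a ≠ z := by
        intro h'; exact h (by simp [h'])
      rw [kap, map_commutatorElement, ih b hz1, retr_of_ne z hz2]

lemma retr_kap_kill (z : α) (a : α) (L : List α) (h : z ∈ a :: L) :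
    retr z (kap a L) = 1 := by
  induction L generalizing a with
  | nil =>
      have : a = z := by simpa [eq_comm] using h
      simp [kap, this]
  | cons b L ih =>
      rw [kap, map_commutatorElement]
      rcases List.mem_cons.mp h with h' | h'
      · rw [h', retr_of_self]; simp
      · rw [ih b h']; simp

lemma retr_kap_diag (z : α) (a : α) (L : List α) :
    retr z (kap a L) = kap a L ∨ retr z (kap a L) = 1 := by
  by_cases h : z ∈ a :: L
  · exact Or.inr (retr_kap_kill z a L h)
  · exact Or.inl (retr_kap_fix z a L h)

/-- the set of images of weight `k+1` letter commutators -/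
def Cset (k : ℕ) : Set (FreeGroup α) :=
  {x | ∃ a L, List.length L = k ∧ x = kap a L}

lemma Cset_subset_lcs (k : ℕ) :
    (Cset k : Set (FreeGroup α)) ⊆ ((⊤ : Subgroup (FreeGroup α)).lowerCentralSeries k : Set (FreeGroup α)) := by
  rintro x ⟨a, L, hL, rfl⟩
  simpa [hL] using kap_mem_lcs a L

/-- commutator identities -/
lemma comm_mul_left (x y b : FreeGroup α) :
    ⁅x * y, b⁆ = x * ⁅y, b⁆ * x⁻¹ * ⁅x, b⁆ := by
  simp only [commutatorElement_def]; group

lemma comm_inv_left (x b : FreeGroup α) :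
    ⁅x⁻¹, b⁆ = x⁻¹ * ⁅x, b⁆⁻¹ * x := by
  simp only [commutatorElement_def]; group

lemma comm_mul_right (x b c : FreeGroup α) :
    ⁅x, b * c⁆ = ⁅x, b⁆ * (b * ⁅x, c⁆ * b⁻¹) := by
  simp only [commutatorElement_def]; group

lemma comm_inv_right (x b : FreeGroup α) :
    ⁅x, b⁻¹⁆ = b⁻¹ * ⁅x, b⁆⁻¹ * b := by
  simp only [commutatorElement_def]; group

lemma conj_eq_mul_comm (g κ : FreeGroup α) :
    g * κ * g⁻¹ = κ * ⁅κ⁻¹, g⁆ := by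
  simp only [commutatorElement_def]; group

section Gen

/-- conjugation stability of the relevant closure -/
lemma conj_mem_T (k : ℕ) (g : FreeGroup α) (x : FreeGroup α)
    (hx : x ∈ Subgroup.closure ((Cset (k+1) : Set (FreeGroup α)) ∪
        ((⊤ : Subgroup (FreeGroup α)).lowerCentralSeries (k+2) : Set (FreeGroup α)))) :
    g * x * g⁻¹ ∈ Subgroup.closure ((Cset (k+1) : Set (FreeGroup α)) ∪
        ((⊤ : Subgroup (FreeGroup α)).lowerCentralSeries (k+2) : Set (FreeGroup α))) := by
  set T := Subgroup.closure ((Cset (k+1) : Set (FreeGroup α)) ∪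
      ((⊤ : Subgroup (FreeGroup α)).lowerCentralSeries (k+2) : Set (FreeGroup α))) with hT
  induction hx using Subgroup.closure_induction with
  | mem x hx =>
      rcases hx with hκ | hN
      · have hκT : x ∈ T := Subgroup.subset_closure (Or.inl hκ)
        have hκlcs : x ∈ (⊤ : Subgroup (FreeGroup α)).lowerCentralSeries (k+1) := Cset_subset_lcs (k+1) hκ
        have hcom : ⁅x⁻¹, g⁆ ∈ (⊤ : Subgroup (FreeGroup α)).lowerCentralSeries (k+2) :=
          Subgroup.commutator_mem_commutator (inv_mem hκlcs) (Subgroup.mem_top _)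
        rw [conj_eq_mul_comm]
        exact mul_mem hκT (Subgroup.subset_closure (Or.inr hcom))
      · have : g * x * g⁻¹ ∈ (⊤ : Subgroup (FreeGroup α)).lowerCentralSeries (k+2) :=
          (Subgroup.lowerCentralSeries_normal ⊤ (k+2)).conj_mem x hN g
        exact Subgroup.subset_closure (Or.inr this)
  | one => simpa using T.one_mem
  | mul a b _ _ ha hb =>
      have : g * (a * b) * g⁻¹ = (g * a * g⁻¹) * (g * b * g⁻¹) := by group
      rw [this]; exact mul_mem ha hb
  | inv a _ ha =>
      have : g * a⁻¹ * g⁻¹ = (g * a * g⁻¹)⁻¹ := by group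
      rw [this]; exact inv_mem ha

/-- Generation lemma: `γₖ(F)` is generated by weight `k+1` letter commutators
together with `γₖ₊₁(F)`. -/
theorem lcs_le_closure_kap : ∀ k : ℕ,
    (⊤ : Subgroup (FreeGroup α)).lowerCentralSeries k ≤
      Subgroup.closure ((Cset k : Set (FreeGroup α)) ∪
        ((⊤ : Subgroup (FreeGroup α)).lowerCentralSeries (k+1) : Set (FreeGroup α))) := by
  intro k
  induction k with
  | zero =>
      rw [Subgroup.lowerCentralSeries_zero, ← FreeGroup.closure_range_of α]
      apply Subgroup.closure_mono
      intro x hx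
      rcases hx with ⟨a, rfl⟩
      exact Or.inl ⟨a, [], rfl, rfl⟩
  | succ k ih =>
      set T := Subgroup.closure ((Cset (k+1) : Set (FreeGroup α)) ∪
          ((⊤ : Subgroup (FreeGroup α)).lowerCentralSeries (k+2) : Set (FreeGroup α))) with hT
      have key : ∀ a ∈ (⊤ : Subgroup (FreeGroup α)).lowerCentralSeries k, ∀ b : FreeGroup α, ⁅a, b⁆ ∈ T := by
        intro a ha
        refine Subgroup.closure_induction
          (p := fun x _ => ∀ b : FreeGroup α, ⁅x, b⁆ ∈ T) ?_ ?_ ?_ ?_ (ih ha)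
        · intro x hx
          rcases hx with hκ | hN
          · intro b
            induction b using FreeGroup.induction_on with
            | C1 => simpa using T.one_mem
            | of a' =>
                rcases hκ with ⟨c, L, hL, rfl⟩
                show ⁅kap c L, FreeGroup.of a'⁆ ∈ T
                exact Subgroup.subset_closure (Or.inl ⟨a', c :: L, by simp [hL], rfl⟩)
            | inv_of a' hIH =>
                show ⁅x, (FreeGroup.of a')⁻¹⁆ ∈ T
                rw [comm_inv_right]
                have h1 : ⁅x, FreeGroup.of a'⁆⁻¹ ∈ T := inv_mem hIH
                have := conj_mem_T k (FreeGroup.of a')⁻¹ _ h1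
                simpa [mul_assoc, -Subgroup.lowerCentralSeries_succ] using this
            | mul b c hb hc =>
                rw [comm_mul_right]
                exact mul_mem hb (conj_mem_T k b _ hc)
          · intro b
            have : ⁅x, b⁆ ∈ (⊤ : Subgroup (FreeGroup α)).lowerCentralSeries (k+2) :=
              Subgroup.commutator_mem_commutator hN (Subgroup.mem_top _)
            exact Subgroup.subset_closure (Or.inr this)
        · intro b
          have h1 : ⁅(1 : FreeGroup α), b⁆ = 1 := by simp
          rw [h1]; exact T.one_mem
        · intro x y _ _ hxT hyT b
          rw [comm_mul_left]
          have h3 := conj_mem_T k x _ (hyT b)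
          exact mul_mem (by simpa [mul_assoc, -Subgroup.lowerCentralSeries_succ] using h3) (hxT b)
        · intro x _ hxT b
          rw [comm_inv_left]
          have := conj_mem_T k x⁻¹ _ (inv_mem (hxT b))
          simpa [mul_assoc, -Subgroup.lowerCentralSeries_succ] using this
      show ⁅(⊤ : Subgroup (FreeGroup α)).lowerCentralSeries k, (⊤ : Subgroup (FreeGroup α))⁆ ≤ T
      rw [Subgroup.commutator_le]
      exact fun a ha b _ => key a ha b

end Gen

section Kill
open Pointwise

variable {G : Type*} [Group G]

/-- If a subgroup is generated by central elements on which a family of endomorphisms acts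
diagonally, each generator being fixed by at least one of them, then an element of the
subgroup killed by all the endomorphisms is trivial. -/
theorem kill {s : ℕ} (rr : Fin s → (G →* G)) (S : Set G)
    (hcen : S ⊆ Subgroup.center G)
    (hdiag : ∀ c ∈ S, ∀ i, rr i c = c ∨ rr i c = 1)
    (hfix : ∀ c ∈ S, ∃ i, rr i c = c) :
    ∀ x ∈ Subgroup.closure S, (∀ i, rr i x = 1) → x = 1 := by
  have main : ∀ J : Finset (Fin s), ∀ x ∈ Subgroup.closure {c | c ∈ S ∧ ∃ i ∈ J, rr i c = c},
      (∀ i, rr i x = 1) → x = 1 := by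
    intro J
    induction J using Finset.induction_on with
    | empty =>
        intro x hx _
        have : {c | c ∈ S ∧ ∃ i ∈ (∅ : Finset (Fin s)), rr i c = c} = (∅ : Set G) := by
          ext c; simp
        rw [this, Subgroup.closure_empty] at hx
        simpa using hx
    | @insert j J hj ih =>
        intro x hx hkill
        have hsplit : {c | c ∈ S ∧ ∃ i ∈ insert j J, rr i c = c} =
            {c | c ∈ S ∧ rr j c = c} ∪ {c | c ∈ S ∧ ∃ i ∈ J, rr i c = c} := by
          ext c
          simp only [Set.mem_setOf_eq, Set.mem_union, Finset.mem_insert]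
          constructor
          · rintro ⟨hc, i, (rfl | hiJ), hi⟩
            · exact Or.inl ⟨hc, hi⟩
            · exact Or.inr ⟨hc, i, hiJ, hi⟩
          · rintro (⟨hc, hi⟩ | ⟨hc, i, hiJ, hi⟩)
            · exact ⟨hc, j, Or.inl rfl, hi⟩
            · exact ⟨hc, i, Or.inr hiJ, hi⟩
        rw [hsplit, Subgroup.closure_union] at hx
        set A := Subgroup.closure {c | c ∈ S ∧ rr j c = c} with hA
        set B := Subgroup.closure {c | c ∈ S ∧ ∃ i ∈ J, rr i c = c} with hB
        have hBcen : B ≤ Subgroup.center G :=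
          Subgroup.closure_le _ |>.mpr (fun c hc => hcen hc.1)
        haveI : B.Normal := by
          constructor
          intro n hn g
          have : n ∈ Subgroup.center G := hBcen hn
          have hcomm := (Subgroup.mem_center_iff.mp this) g
          have hgng : g * n * g⁻¹ = n := by rw [hcomm]; group
          rwa [hgng]
        have hxAB : x ∈ (A : Set G) * (B : Set G) := by
          rw [← Subgroup.mul_normal A B]; exact_mod_cast hx
        obtain ⟨y, hy, z, hz, rfl⟩ := hxAB
        have hyfix : rr j y = y := by
          have : A ≤ MonoidHom.eqLocus (rr j) (MonoidHom.id G) :=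
            Subgroup.closure_le _ |>.mpr (fun c hc => hc.2)
          exact this hy
        have h1 : rr j (y * z) = y * rr j z := by rw [map_mul, hyfix]
        have hy_eq : y = (rr j z)⁻¹ := by
          have := hkill j
          rw [h1] at this
          exact eq_inv_of_mul_eq_one_left this
        have hrjz : rr j z ∈ B := by
          have himg : rr j z ∈ Subgroup.map (rr j) B := Subgroup.mem_map_of_mem _ hz
          have : Subgroup.map (rr j) B ≤ B := by
            rw [hB, MonoidHom.map_closure]
            apply Subgroup.closure_le _ |>.mpr
            rintro c' ⟨c, hc, rfl⟩
            rcases hdiag c hc.1 j with h | h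
            · rw [h]; exact Subgroup.subset_closure hc
            · rw [h]; exact B.one_mem
          exact this himg
        have hxB : y * z ∈ B := by
          rw [hy_eq]; exact mul_mem (inv_mem hrjz) hz
        exact ih _ hxB hkill
  intro x hx hkill
  have : Subgroup.closure S ≤ Subgroup.closure {c | c ∈ S ∧ ∃ i ∈ (Finset.univ : Finset (Fin s)), rr i c = c} := by
    apply Subgroup.closure_mono
    intro c hc
    rcases hfix c hc with ⟨i, hi⟩
    exact ⟨hc, i, Finset.mem_univ i, hi⟩
  exact main Finset.univ x (this hx) hkill

end Kill

section Aug

variable {α : Type*} [DecidableEq α]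

/-- Main free-group lemma: an element killed by `s` letter-retractions lies in the
`k`-th term of the lower central series whenever `k + 1 ≤ s`. -/
theorem aug {s : ℕ} (y : Fin s → α) (hy : Function.Injective y)
    (v : FreeGroup α) (hv : ∀ i, retr (y i) v = 1) :
    ∀ k, k + 1 ≤ s → v ∈ (⊤ : Subgroup (FreeGroup α)).lowerCentralSeries k := by
  intro k
  induction k with
  | zero => intro _; exact Subgroup.mem_top v
  | succ k ih =>
      intro hks
      have hvk : v ∈ (⊤ : Subgroup (FreeGroup α)).lowerCentralSeries k := ih (by omega)
      set N := (⊤ : Subgroup (FreeGroup α)).lowerCentralSeries (k+1) with hN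
      haveI : N.Normal := Subgroup.lowerCentralSeries_normal ⊤ (k+1)
      set π := QuotientGroup.mk' N with hπ
      have hle : ∀ i : Fin s, N ≤ N.comap (retr (y i)) := by
        intro i
        rw [← Subgroup.map_le_iff_le_comap]
        exact Subgroup.lowerCentralSeries.map (retr (y i)) (k+1)
      set rhat : Fin s → (FreeGroup α ⧸ N) →* (FreeGroup α ⧸ N) :=
        fun i => QuotientGroup.map N N (retr (y i)) (hle i) with hrhat
      -- v is in the closure of letter commutators together with N
      have hvc := lcs_le_closure_kap (α := α) k hvk
      have hπv : π v ∈ Subgroup.closure (π '' (Cset k)) := by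
        have h1 : Subgroup.map π (Subgroup.closure ((Cset k : Set (FreeGroup α)) ∪ N))
            = Subgroup.closure (π '' ((Cset k : Set (FreeGroup α)) ∪ N)) :=
          MonoidHom.map_closure π _
        have h2 : π v ∈ Subgroup.closure (π '' ((Cset k : Set (FreeGroup α)) ∪ N)) := by
          rw [← h1]; exact Subgroup.mem_map_of_mem π hvc
        refine Subgroup.closure_le _ |>.mpr ?_ h2
        rw [Set.image_union]
        apply Set.union_subset
        · exact Set.Subset.trans (by rfl) Subgroup.subset_closure
        · rintro _ ⟨n, hn, rfl⟩
          have : π n = 1 := (QuotientGroup.eq_one_iff n).mpr hn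
          rw [this]; exact Subgroup.one_mem _
      -- apply kill
      have hkilled : π v = 1 := by
        apply kill rhat (π '' (Cset k))
        · -- centrality
          rintro _ ⟨κ, hκ, rfl⟩
          have hκk : κ ∈ (⊤ : Subgroup (FreeGroup α)).lowerCentralSeries k := Cset_subset_lcs k hκ
          rw [SetLike.mem_coe, Subgroup.mem_center_iff]
          intro q
          induction q using QuotientGroup.induction_on with
          | H g =>
            show ((g : FreeGroup α ⧸ N) * π κ) = π κ * g
            have : ((g * κ : FreeGroup α) : FreeGroup α ⧸ N) = ((κ * g : FreeGroup α) : FreeGroup α ⧸ N) := by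
              rw [QuotientGroup.eq]
              have : (g * κ)⁻¹ * (κ * g) = ⁅κ⁻¹, g⁻¹⁆ := by
                simp only [commutatorElement_def]; group
              rw [this]
              exact Subgroup.commutator_mem_commutator (inv_mem hκk) (Subgroup.mem_top _)
            exact this
        · -- diagonality
          rintro _ ⟨κ, hκ, rfl⟩ i
          rcases hκ with ⟨a, L, hL, rfl⟩
          have : rhat i (π (kap a L)) = π (retr (y i) (kap a L)) := by
            simp [hrhat, hπ, QuotientGroup.map_mk']
          rcases retr_kap_diag (y i) a L with h | h
          · left; rw [this, h]
          · right; rw [this, h]; simp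
        · -- fixed by at least one
          rintro _ ⟨κ, hκ, rfl⟩
          rcases hκ with ⟨a, L, hL, rfl⟩
          have hlen : (a :: L).length < s := by simp [hL]; omega
          have : ∃ i, y i ∉ a :: L := by
            by_contra hcon
            push_neg at hcon
            have hsub : Finset.image y Finset.univ ⊆ (a :: L).toFinset := by
              intro b hb
              rcases Finset.mem_image.mp hb with ⟨i, _, rfl⟩
              exact List.mem_toFinset.mpr (hcon i)
            have h1 : (Finset.image y Finset.univ).card = s := by
              rw [Finset.card_image_of_injective _ hy, Finset.card_univ, Fintype.card_fin]
            have h2 : (a :: L).toFinset.card ≤ (a :: L).length := List.toFinset_card_le _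
            have := Finset.card_le_card hsub
            omega
          rcases this with ⟨i, hi⟩
          refine ⟨i, ?_⟩
          have : rhat i (π (kap a L)) = π (retr (y i) (kap a L)) := by
            simp [hrhat, hπ, QuotientGroup.map_mk']
          rw [this, retr_kap_fix (y i) a L hi]
        · exact hπv
        · intro i
          have : rhat i (π v) = π (retr (y i) v) := by
            simp [hrhat, hπ, QuotientGroup.map_mk']
          rw [this, hv i]; simp
      rwa [← QuotientGroup.eq_one_iff (G := FreeGroup α) (N := N) v]

end Aug

section Cube

variable {t s : ℕ}

/-- The substitution endomorphism activating letter `inr i` at slot `j₀`. -/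
def theta (j₀ : Fin t) (i : Fin s) : FreeGroup (Fin t ⊕ Fin s) →* FreeGroup (Fin t ⊕ Fin s) :=
  FreeGroup.lift (fun a => if a = Sum.inl j₀ then
    FreeGroup.of a * FreeGroup.of (Sum.inr i) else FreeGroup.of a)

variable (jj : Fin s → Fin t)

/-- for `l < s`, the `l`-th theta, otherwise the identity -/
def thetaN (l : ℕ) : FreeGroup (Fin t ⊕ Fin s) →* FreeGroup (Fin t ⊕ Fin s) :=
  if h : l < s then theta (jj ⟨l, h⟩) ⟨l, h⟩ else MonoidHom.id _

/-- The iterated difference (cube) words. -/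
def Vword (w : FreeGroup (Fin t)) : ℕ → FreeGroup (Fin t ⊕ Fin s)
  | 0 => FreeGroup.map Sum.inl w
  | l + 1 => thetaN jj l (Vword w l) * (Vword w l)⁻¹

/-- retraction of `inr i` -/
def rI (i : Fin s) : FreeGroup (Fin t ⊕ Fin s) →* FreeGroup (Fin t ⊕ Fin s) :=
  retr (Sum.inr i)

@[simp] lemma theta_of_self (j₀ : Fin t) (i : Fin s) :
    theta j₀ i (FreeGroup.of (Sum.inl j₀)) =
      FreeGroup.of (Sum.inl j₀ : Fin t ⊕ Fin s) * FreeGroup.of (Sum.inr i) := by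
  rw [theta, FreeGroup.lift_apply_of, if_pos rfl]

lemma theta_of_ne (j₀ : Fin t) (i : Fin s) {a : Fin t ⊕ Fin s} (h : a ≠ Sum.inl j₀) :
    theta j₀ i (FreeGroup.of a) = FreeGroup.of a := by
  rw [theta, FreeGroup.lift_apply_of, if_neg h]

lemma rI_inl (i : Fin s) (b : Fin t) :
    rI (i : Fin s) (FreeGroup.of (Sum.inl b : Fin t ⊕ Fin s)) = FreeGroup.of (Sum.inl b) :=
  retr_of_ne _ (by simp)

lemma rI_comp_thetaN_self (i : Fin s) :
    (rI (i : Fin s)).comp (thetaN jj i.val) = rI i := by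
  apply FreeGroup.ext_hom
  intro a
  rw [MonoidHom.comp_apply, thetaN, dif_pos i.isLt]
  have : (⟨i.val, i.isLt⟩ : Fin s) = i := Fin.eta i i.isLt
  rw [this]
  by_cases ha : a = Sum.inl (jj i)
  · subst ha
    rw [theta_of_self, map_mul, rI_inl, rI, retr_of_self]
    rw [mul_one]
  · rw [theta_of_ne _ _ ha]

lemma rI_comp_thetaN_ne (i : Fin s) (l : ℕ) (hne : l ≠ i.val) :
    (rI i).comp (thetaN jj l) = (thetaN jj l).comp (rI i) := by
  apply FreeGroup.ext_hom
  intro a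
  by_cases hl : l < s
  · rw [MonoidHom.comp_apply, MonoidHom.comp_apply, thetaN, dif_pos hl]
    by_cases ha : a = Sum.inl (jj ⟨l, hl⟩)
    · subst ha
      have h2 : (Sum.inr (⟨l, hl⟩ : Fin s) : Fin t ⊕ Fin s) ≠ Sum.inr i := by
        simp only [ne_eq, Sum.inr.injEq]
        intro h; exact hne (congrArg Fin.val h)
      rw [theta_of_self, map_mul, rI_inl, rI, retr_of_ne _ h2, theta_of_self]
    · rw [theta_of_ne _ _ ha]
      by_cases hai : a = Sum.inr i
      · subst hai
        rw [rI, retr_of_self, map_one]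
      · rw [rI, retr_of_ne _ hai, theta_of_ne _ _ ha]
  · rw [thetaN, dif_neg hl]
    rfl

lemma rI_Vword (w : FreeGroup (Fin t)) (i : Fin s) :
    ∀ l, i.val < l → rI i (Vword jj w l) = 1 := by
  intro l
  induction l with
  | zero => omega
  | succ l ih =>
      intro hil
      by_cases hl : i.val = l
      · subst hl
        rw [Vword, map_mul, map_inv]
        have := congrArg (fun (f : FreeGroup (Fin t ⊕ Fin s) →* FreeGroup (Fin t ⊕ Fin s)) =>
          f (Vword jj w i.val)) (rI_comp_thetaN_self jj i)
        simp only [MonoidHom.comp_apply] at this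
        rw [this]
        simp
      · have hlt : i.val < l := by omega
        rw [Vword, map_mul, map_inv, ih hlt]
        have := congrArg (fun (f : FreeGroup (Fin t ⊕ Fin s) →* FreeGroup (Fin t ⊕ Fin s)) =>
          f (Vword jj w l)) (rI_comp_thetaN_ne jj i l (by omega))
        simp only [MonoidHom.comp_apply] at this
        rw [this, ih hlt]
        simp

end Cube

section Eval

variable {t s : ℕ} (jj : Fin s → Fin t) {X : Type*} [Group X]

/-- evaluation homomorphism sending `inl j ↦ vv j` and `inr i ↦ g` -/
def Phi (g : X) (vv : Fin t → X) : FreeGroup (Fin t ⊕ Fin s) →* X :=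
  FreeGroup.lift (Sum.elim vv fun _ => g)

lemma Phi_V0 (g : X) (vv : Fin t → X) (w : FreeGroup (Fin t)) :
    Phi (s := s) g vv (Vword jj w 0) = FreeGroup.lift vv w := by
  have h : (Phi (s := s) g vv).comp (FreeGroup.map Sum.inl) = FreeGroup.lift vv := by
    apply FreeGroup.ext_hom
    intro a
    simp [Phi, FreeGroup.map.of]
  exact congrArg (fun f : FreeGroup (Fin t) →* X => f w) h

lemma Phi_thetaN (g : X) (vv : Fin t → X) (l : ℕ) (hl : l < s)
    (z : FreeGroup (Fin t ⊕ Fin s)) :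
    Phi g vv (thetaN jj l z) =
      Phi g (Function.update vv (jj ⟨l, hl⟩) (vv (jj ⟨l, hl⟩) * g)) z := by
  have h : (Phi g vv).comp (thetaN jj l) =
      Phi g (Function.update vv (jj ⟨l, hl⟩) (vv (jj ⟨l, hl⟩) * g)) := by
    apply FreeGroup.ext_hom
    intro a
    rw [MonoidHom.comp_apply, thetaN, dif_pos hl]
    rcases a with b | i
    · by_cases hb : b = jj ⟨l, hl⟩
      · subst hb
        rw [theta_of_self, map_mul]
        simp only [Phi, FreeGroup.lift_apply_of, Sum.elim_inl, Sum.elim_inr, Function.update_self]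
      · rw [theta_of_ne _ _ (by simpa using hb)]
        simp only [Phi, FreeGroup.lift_apply_of, Sum.elim_inl, Function.update_of_ne hb]
    · rw [theta_of_ne _ _ (by simp)]
      simp only [Phi, FreeGroup.lift_apply_of, Sum.elim_inr]
  exact congrArg (fun f : FreeGroup (Fin t ⊕ Fin s) →* X => f z) h

end Eval

section Master

open Subgroup

variable {X : Type*} [Group X] [Finite X]

/-- **Master lemma**: over a finite nilpotent group, a word that evaluates trivially on every
generating tuple (of sufficient length) is a law. -/
theorem master [hnil : Group.IsNilpotent X]
    {t : ℕ} (ht : (Group.nilpotencyClass X + 2) * Nat.card X + 1 ≤ t)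
    (w : FreeGroup (Fin t))
    (hdead : ∀ xx : Fin t → X, Subgroup.closure (Set.range xx) = ⊤ → FreeGroup.lift xx w = 1)
    (yy : Fin t → X) : FreeGroup.lift yy w = 1 := by
  classical
  set c := Group.nilpotencyClass X with hc
  set s := c + 1 with hs
  haveI hFinS : Finite (Subgroup X) :=
    Finite.of_injective (fun H : Subgroup X => (H : Set X)) SetLike.coe_injective
  have hwf : WellFounded ((· > ·) : Subgroup X → Subgroup X → Prop) :=
    (Finite.to_wellFoundedGT).wf
  -- main claim by well-founded recursion on subgroups (downwards)
  have step : ∀ H : Subgroup X,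
      (∀ K : Subgroup X, H < K → ∀ zz : Fin t → X,
        Subgroup.closure (Set.range zz) = K → FreeGroup.lift zz w = 1) →
      ∀ zz : Fin t → X, Subgroup.closure (Set.range zz) = H → FreeGroup.lift zz w = 1 := by
    intro H IH zz hgen
    by_cases htop : H = ⊤
    · exact hdead zz (htop ▸ hgen)
    obtain ⟨g, hg⟩ : ∃ g, g ∉ H := by
      by_contra hcon
      push_neg at hcon
      exact htop ((Subgroup.eq_top_iff' H).mpr hcon)
    letI := Fintype.ofFinite X
    have hNX : Fintype.card X = Nat.card X := (Nat.card_eq_fintype_card).symm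
    -- pigeonhole: some value is taken at least s+1 times
    have hcard : (Finset.univ : Finset X).card * s < (Finset.univ : Finset (Fin t)).card := by
      rw [Finset.card_univ, Finset.card_univ, Fintype.card_fin, hNX]
      have h1 : Nat.card X * s ≤ Nat.card X * (c + 2) := Nat.mul_le_mul_left _ (by omega)
      have h2 : Nat.card X * (c + 2) = (c + 2) * Nat.card X := Nat.mul_comm _ _
      omega
    obtain ⟨u, -, hufiber⟩ := Finset.exists_lt_card_fiber_of_mul_lt_card_of_maps_to
      (f := zz) (t := (Finset.univ : Finset X)) (fun a _ => Finset.mem_univ _) hcard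
    obtain ⟨F', hF'sub, hF'card⟩ := Finset.exists_subset_card_eq
      (show s + 1 ≤ (Finset.filter (fun x => zz x = u) Finset.univ).card by omega)
    let jfull : Fin (s+1) ↪o Fin t := F'.orderEmbOfFin hF'card
    have hjmem : ∀ i : Fin (s+1), zz (jfull i) = u := by
      intro i
      have h1 : (jfull i : Fin t) ∈ F' := Finset.orderEmbOfFin_mem F' hF'card i
      have h2 := hF'sub h1
      simpa using (Finset.mem_filter.mp h2).2
    set jc : Fin s → Fin t := fun i => jfull i.succ with hjc
    have hjc_inj : Function.Injective jc := by
      intro a b hab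
      exact Fin.succ_injective _ (jfull.injective hab)
    have hj0 : ∀ i, jc i ≠ jfull 0 := by
      intro i h
      exact (Fin.succ_ne_zero i) (jfull.injective h)
    have hval : ∀ i, zz (jc i) = u := fun i => hjmem i.succ
    have hval0 : zz (jfull 0) = u := hjmem 0
    -- perturbed tuples
    set pert : (Fin s → Bool) → (Fin t → X) := fun b idx =>
      if ∃ i, jc i = idx ∧ b i = true then zz idx * g else zz idx with hpert
    have hzzmem : ∀ idx, zz idx ∈ H := by
      intro idx
      rw [← hgen]
      exact Subgroup.subset_closure ⟨idx, rfl⟩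
    -- death of all nontrivially perturbed tuples
    have death : ∀ b : Fin s → Bool, (∃ i, b i = true) → FreeGroup.lift (pert b) w = 1 := by
      intro b hb
      set K := H ⊔ Subgroup.closure {g} with hK
      have hle2 : Subgroup.closure {g} ≤ K := le_sup_right
      have hle1 : H ≤ K := le_sup_left
      have hgK : g ∈ K := hle2 (Subgroup.subset_closure (Set.mem_singleton g))
      have hHK : H < K := lt_of_le_of_ne le_sup_left (by
        intro h
        exact hg (h ▸ hgK))
      have humem : u ∈ Subgroup.closure (Set.range (pert b)) := by
        have h1 : pert b (jfull 0) = zz (jfull 0) := by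
          rw [hpert]
          simp only
          rw [if_neg]
          rintro ⟨i', hji', -⟩
          exact hj0 i' hji'
        rw [← hval0, ← h1]
        exact Subgroup.subset_closure ⟨jfull 0, rfl⟩
      have hKgen : Subgroup.closure (Set.range (pert b)) = K := by
        apply le_antisymm
        · rw [Subgroup.closure_le]
          rintro x ⟨idx, rfl⟩
          rw [hpert]
          simp only
          split_ifs with h
          · exact mul_mem (hle1 (hzzmem idx)) hgK
          · exact hle1 (hzzmem idx)
        · apply sup_le
          · rw [← hgen, Subgroup.closure_le]
            rintro x ⟨idx, rfl⟩
            by_cases hidx : ∃ i, jc i = idx ∧ b i = true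
            · rcases hidx with ⟨i, hji, hbi⟩
              have h2 : zz idx = u := hji ▸ hval i
              rw [SetLike.mem_coe, h2]
              exact humem
            · have h1 : pert b idx = zz idx := by
                rw [hpert]; simp only; rw [if_neg hidx]
              rw [SetLike.mem_coe, ← h1]
              exact Subgroup.subset_closure ⟨idx, rfl⟩
          · rw [Subgroup.closure_le, Set.singleton_subset_iff]
            rcases hb with ⟨i₀, hb₀⟩
            have h1 : pert b (jc i₀) = u * g := by
              rw [hpert]; simp only
              rw [if_pos ⟨i₀, rfl, hb₀⟩, hval i₀]
            have h2 : u * g ∈ Subgroup.closure (Set.range (pert b)) := by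
              rw [← h1]; exact Subgroup.subset_closure ⟨jc i₀, rfl⟩
            have h3 : g = u⁻¹ * (u * g) := by group
            rw [SetLike.mem_coe, h3]
            exact mul_mem (inv_mem humem) h2
      exact IH K hHK (pert b) hKgen
    -- the cube argument
    have claimA : ∀ l : ℕ, ∀ b : Fin s → Bool, (∀ i : Fin s, b i = true → l ≤ i.val) →
        (∃ i, b i = true) → Phi (s := s) g (pert b) (Vword jc w l) = 1 := by
      intro l
      induction l with
      | zero =>
          intro b _ hb
          rw [Phi_V0]
          exact death b hb
      | succ l ihl =>
          intro b hsupp hb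
          obtain ⟨i₀, hb₀⟩ := hb
          have hls : l < s := by
            have := hsupp i₀ hb₀
            have := i₀.isLt
            omega
          rw [Vword, map_mul, map_inv, Phi_thetaN jc g _ l hls]
          have hpert1 : Function.update (pert b) (jc ⟨l, hls⟩) (pert b (jc ⟨l, hls⟩) * g)
              = pert (Function.update b ⟨l, hls⟩ true) := by
            funext idx
            by_cases hidx : idx = jc ⟨l, hls⟩
            · subst hidx
              rw [Function.update_self]
              have hbl : pert b (jc ⟨l, hls⟩) = zz (jc ⟨l, hls⟩) := by
                rw [hpert]; simp only
                rw [if_neg]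
                rintro ⟨i, hji, hbi⟩
                have hieq : i = ⟨l, hls⟩ := hjc_inj hji
                rw [hieq] at hbi
                have h5 : l + 1 ≤ l := hsupp ⟨l, hls⟩ hbi
                omega
              have hR : pert (Function.update b ⟨l, hls⟩ true) (jc ⟨l, hls⟩)
                  = zz (jc ⟨l, hls⟩) * g := by
                rw [hpert]; simp only
                rw [if_pos ⟨⟨l, hls⟩, rfl, by rw [Function.update_self]⟩]
              rw [hbl, hR]
            · rw [Function.update_of_ne hidx]
              rw [hpert]; simp only
              have hcond : (∃ i, jc i = idx ∧ Function.update b ⟨l, hls⟩ true i = true)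
                  ↔ (∃ i, jc i = idx ∧ b i = true) := by
                constructor
                · rintro ⟨i, hji, hbi⟩
                  have hil : i ≠ ⟨l, hls⟩ := by
                    rintro rfl; exact hidx hji.symm
                  rw [Function.update_of_ne hil] at hbi
                  exact ⟨i, hji, hbi⟩
                · rintro ⟨i, hji, hbi⟩
                  have hil : i ≠ ⟨l, hls⟩ := by
                    rintro rfl; exact hidx hji.symm
                  exact ⟨i, hji, by rw [Function.update_of_ne hil]; exact hbi⟩
              by_cases hcase : ∃ i, jc i = idx ∧ b i = true
              · rw [if_pos hcase, if_pos (hcond.mpr hcase)]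
              · rw [if_neg hcase, if_neg (fun h => hcase (hcond.mp h))]
          rw [hpert1]
          have h1 := ihl (Function.update b ⟨l, hls⟩ true)
            (by
              intro i hi
              by_cases hil : i = ⟨l, hls⟩
              · subst hil; exact Nat.le.refl
              · rw [Function.update_of_ne hil] at hi
                have := hsupp i hi
                omega)
            ⟨⟨l, hls⟩, by rw [Function.update_self]⟩
          have h2 := ihl b (fun i hi => by have := hsupp i hi; omega) ⟨i₀, hb₀⟩
          rw [h1, h2]
          simp
    have claimB : ∀ l : ℕ, l ≤ s →
        Phi (s := s) g zz (Vword jc w l) = FreeGroup.lift zz w ∨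
        Phi (s := s) g zz (Vword jc w l) = (FreeGroup.lift zz w)⁻¹ := by
      intro l
      induction l with
      | zero => intro _; left; exact Phi_V0 jc g zz w
      | succ l ihl =>
          intro hl1
          have hls : l < s := by omega
          rw [Vword, map_mul, map_inv, Phi_thetaN jc g _ l hls]
          set b₀ : Fin s → Bool := fun i => decide (i = ⟨l, hls⟩) with hb₀
          have hupd : Function.update zz (jc ⟨l, hls⟩) (zz (jc ⟨l, hls⟩) * g) = pert b₀ := by
            funext idx
            by_cases hidx : idx = jc ⟨l, hls⟩
            · subst hidx
              rw [Function.update_self, hpert]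
              simp only
              rw [if_pos ⟨⟨l, hls⟩, rfl, by simp [hb₀]⟩]
            · rw [Function.update_of_ne hidx, hpert]
              simp only
              rw [if_neg]
              rintro ⟨i, hji, hbi⟩
              have hil : i = ⟨l, hls⟩ := by simpa [hb₀] using hbi
              subst hil
              exact hidx hji.symm
          rw [hupd]
          have hA := claimA l b₀
            (by
              intro i hi
              have hil : i = ⟨l, hls⟩ := by simpa [hb₀] using hi
              subst hil
              exact Nat.le.refl)
            ⟨⟨l, hls⟩, by simp [hb₀]⟩
          rw [hA]
          rcases ihl (by omega) with h | h
          · right; rw [h, one_mul]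
          · left; rw [h, one_mul, inv_inv]
    -- conclude using aug
    have hVs : Vword jc w s ∈ (⊤ : Subgroup (FreeGroup (Fin t ⊕ Fin s))).lowerCentralSeries c := by
      apply aug (y := fun i : Fin s => (Sum.inr i : Fin t ⊕ Fin s))
        (fun a b hab => by simpa using hab)
        (Vword jc w s)
        (fun i => rI_Vword jc w i s i.isLt)
        c (by omega)
    have hmap : Phi (s := s) g zz (Vword jc w s) ∈ (⊤ : Subgroup X).lowerCentralSeries c := by
      apply Subgroup.lowerCentralSeries.map (Phi (s := s) g zz) c
      exact Subgroup.mem_map_of_mem _ hVs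
    rw [hc, Subgroup.lowerCentralSeries_nilpotencyClass, Subgroup.mem_bot] at hmap
    rcases claimB s le_rfl with h | h
    · rw [← h]; exact hmap
    · rw [h] at hmap
      exact inv_eq_one.mp hmap
  exact hwf.induction (C := fun H => ∀ zz : Fin t → X,
      Subgroup.closure (Set.range zz) = H → FreeGroup.lift zz w = 1)
    (Subgroup.closure (Set.range yy))
    (fun H IH => step H (fun K hK => IH K hK)) yy rfl

end Master

end SubdirectAux

/-- Let `X` be a finite nilpotent group, `B ≤ X^m` a subgroup, and `Y` a surjective
homomorphic image of `B`. Then `Y` is a homomorphic image of a finite subdirect power of `X`. -/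
theorem quotient_of_subgroup_of_power_is_image_of_subdirect_power
    (X : Type*) [Group X] [Finite X] (hX : Group.IsNilpotent X)
    (m : ℕ) (hm : 0 < m) (B : Subgroup (Fin m → X))
    (Y : Type*) [Group Y] (f : B →* Y) (hf : Function.Surjective f) :
    ∃ (n : ℕ), 0 < n ∧ ∃ D : Subgroup (Fin n → X),
      (∀ (i : Fin n) (a : X), ∃ d ∈ D, d i = a) ∧
      ∃ μ : D →* Y, Function.Surjective μ := by
  classical
  haveI : Group.IsNilpotent X := hX
  haveI : Finite Y := Finite.of_surjective f hf
  set c := Group.nilpotencyClass X with hc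
  set t := (c + 2) * Nat.card X + 1 + Nat.card B + Nat.card X with hdeft
  -- enumeration of Y
  obtain ⟨nY, ⟨eY⟩⟩ := Finite.exists_equiv_fin Y
  have hnY : Nat.card Y = nY := Nat.card_eq_of_equiv_fin eY
  have hYB : Nat.card Y ≤ Nat.card B := Nat.card_le_card_of_surjective f hf
  set yfun : Fin t → Y := fun i => if h : (i : ℕ) < nY then eY.symm ⟨i, h⟩ else 1 with hyfun
  have hysurj : Function.Surjective yfun := by
    intro y
    have hlt : ((eY y : Fin nY) : ℕ) < nY := (eY y).isLt
    have hlt2 : ((eY y : Fin nY) : ℕ) < t := by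
      have h1 : nY ≤ t := by
        rw [← hnY, hdeft]; omega
      omega
    refine ⟨⟨(eY y : Fin nY), hlt2⟩, ?_⟩
    rw [hyfun]
    simp only [dif_pos hlt]
    rw [Fin.eta]
    exact eY.symm_apply_apply y
  set bb : Fin t → B := fun i => Function.surjInv hf (yfun i) with hbb
  have hfb : ∀ i, f (bb i) = yfun i := fun i => Function.surjInv_eq hf _
  -- the index type of generating tuples
  let I := {xx : Fin t → X // Subgroup.closure (Set.range xx) = ⊤}
  haveI : Finite I := Subtype.finite
  -- nonemptiness via an enumeration of X
  obtain ⟨nX, ⟨eX⟩⟩ := Finite.exists_equiv_fin X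
  have hnX : Nat.card X = nX := Nat.card_eq_of_equiv_fin eX
  have hIne : Nonempty I := by
    set xx0 : Fin t → X := fun i => if h : (i : ℕ) < nX then eX.symm ⟨i, h⟩ else 1 with hxx0
    refine ⟨⟨xx0, ?_⟩⟩
    have hrange : Set.range xx0 = Set.univ := by
      apply Set.eq_univ_of_forall
      intro x
      have hlt : ((eX x : Fin nX) : ℕ) < nX := (eX x).isLt
      have hlt2 : ((eX x : Fin nX) : ℕ) < t := by
        have h1 : nX ≤ t := by rw [← hnX, hdeft]; omega
        omega
      refine ⟨⟨(eX x : Fin nX), hlt2⟩, ?_⟩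
      rw [hxx0]
      simp only [dif_pos hlt]
      rw [Fin.eta]
      exact eX.symm_apply_apply x
    rw [hrange, Subgroup.closure_univ]
  obtain ⟨n, ⟨eI⟩⟩ := Finite.exists_equiv_fin I
  have hn : 0 < n := (eI hIne.some).pos
  -- the big evaluation homomorphism
  set Φbig : FreeGroup (Fin t) →* (Fin n → X) :=
    FreeGroup.lift (fun j => fun i : Fin n => (eI.symm i).val j) with hΦbig
  have hcoordhom : ∀ i : Fin n,
      (Pi.evalMonoidHom (fun _ : Fin n => X) i).comp Φbig
        = FreeGroup.lift ((eI.symm i).val) := by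
    intro i
    apply FreeGroup.ext_hom
    intro a
    simp [hΦbig, Pi.evalMonoidHom]
  refine ⟨n, hn, Φbig.range, ?_, ?_⟩
  · -- subdirectness
    intro i a
    have hxx : Subgroup.closure (Set.range ((eI.symm i).val)) = ⊤ := (eI.symm i).prop
    have ha : a ∈ (FreeGroup.lift ((eI.symm i).val)).range := by
      rw [FreeGroup.range_lift_eq_closure, hxx]
      trivial
    obtain ⟨v, hv⟩ := ha
    refine ⟨Φbig v, ⟨v, rfl⟩, ?_⟩
    have := congrArg (fun (F : FreeGroup (Fin t) →* X) => F v) (hcoordhom i)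
    simpa using this.trans hv
  · -- the homomorphism onto Y
    set Ψ : FreeGroup (Fin t) →* Y := f.comp (FreeGroup.lift bb) with hΨ
    have hΨsurj : Function.Surjective Ψ := by
      intro y
      obtain ⟨i, hi⟩ := hysurj y
      exact ⟨FreeGroup.of i, by rw [hΨ]; simp [hfb, hi]⟩
    have hker : ∀ v ∈ Φbig.ker, Ψ v = 1 := by
      intro v hv
      rw [MonoidHom.mem_ker] at hv
      -- v is trivial on all generating tuples
      have hdead : ∀ xx : Fin t → X, Subgroup.closure (Set.range xx) = ⊤ →
          FreeGroup.lift xx v = 1 := by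
        intro xx hxx
        have h1 := congrArg (fun (F : FreeGroup (Fin t) →* X) => F v)
          (hcoordhom (eI ⟨xx, hxx⟩))
        simp only [MonoidHom.comp_apply, Equiv.symm_apply_apply] at h1
        rw [hv] at h1
        simpa using h1.symm
      -- hence a law of X
      have hlaw : ∀ zz : Fin t → X, FreeGroup.lift zz v = 1 := by
        intro zz
        apply SubdirectAux.master (ht := ?_) v hdead zz
        rw [← hc, hdeft]; omega
      -- hence trivial on B
      have hBval : FreeGroup.lift bb v = 1 := by
        have hcoord : ∀ κ : Fin m, ((FreeGroup.lift bb v : B) : Fin m → X) κ = 1 := by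
          intro κ
          have hhom : (Pi.evalMonoidHom (fun _ : Fin m => X) κ).comp
              (B.subtype.comp (FreeGroup.lift bb))
                = FreeGroup.lift (fun j => ((bb j : Fin m → X)) κ) := by
            apply FreeGroup.ext_hom
            intro a
            simp [Pi.evalMonoidHom]
          have := congrArg (fun (F : FreeGroup (Fin t) →* X) => F v) hhom
          simp only [MonoidHom.comp_apply] at this
          exact this.trans (hlaw _)
        have : ((FreeGroup.lift bb v : B) : Fin m → X) = 1 := funext hcoord
        exact Subtype.ext (by rw [this]; rfl)
      rw [hΨ, MonoidHom.comp_apply, hBval, map_one]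
    -- build μ by factoring Ψ through the range of Φbig
    set q := QuotientGroup.quotientKerEquivRange Φbig with hq
    set μ0 : FreeGroup (Fin t) ⧸ Φbig.ker →* Y := QuotientGroup.lift Φbig.ker Ψ hker with hμ0
    refine ⟨μ0.comp q.symm.toMonoidHom, ?_⟩
    intro y
    obtain ⟨v, hv⟩ := hΨsurj y
    refine ⟨q (QuotientGroup.mk v), ?_⟩
    simp only [MonoidHom.comp_apply, MulEquiv.coe_toMonoidHom, MulEquiv.symm_apply_apply]
    rw [hμ0]
    exact hv
end

section
/- Let A be an abelian group (not necessarily finite) and let B be a subgroup of A. Then B is a retract of a finite subdirect power of A: there exist a positive integer n, a subgroup D of A^n such that every coordinate projection D → A is surjective, a surjective group homomorphism μ : D → B, and a group homomorphism ν : B → D with μ ∘ ν = id_B. -/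
/-- Let `A` be an abelian group (not necessarily finite) and `B` a subgroup of `A`. Then `B` is a
retract of a finite subdirect power of `A`. -/
theorem subgroup_of_abelian_is_retract_of_finite_subdirect_power
    (A : Type*) [CommGroup A] (B : Subgroup A) :
    ∃ (n : ℕ), 0 < n ∧ ∃ D : Subgroup (Fin n → A),
      (∀ (i : Fin n) (a : A), ∃ d ∈ D, d i = a) ∧
      ∃ (μ : D →* B) (ν : B →* D),
        Function.Surjective μ ∧ ∀ b : B, μ (ν b) = b := by
  refine ⟨2, two_pos, ?_⟩
  refine ⟨{ carrier := {f | (f 0)⁻¹ * f 1 ∈ B}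
            mul_mem' := ?_
            one_mem' := by simpa using one_mem B
            inv_mem' := ?_ }, ?_, ?_⟩
  · intro f g hf hg
    have : ((f * g) 0)⁻¹ * (f * g) 1 = ((f 0)⁻¹ * f 1) * ((g 0)⁻¹ * g 1) := by
      simp [mul_comm, mul_assoc, mul_left_comm]
    rw [Set.mem_setOf_eq, this]; exact mul_mem hf hg
  · intro f hf
    have : ((f⁻¹) 0)⁻¹ * (f⁻¹) 1 = ((f 0)⁻¹ * f 1)⁻¹ := by
      simp [mul_comm]
    rw [Set.mem_setOf_eq, this]; exact inv_mem hf
  · intro i a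
    refine ⟨fun _ => a, ?_, rfl⟩
    simpa using one_mem B
  · refine ⟨{ toFun := fun d => ⟨(d.1 0)⁻¹ * d.1 1, d.2⟩
              map_one' := by ext; simp
              map_mul' := ?_ },
            { toFun := fun b => ⟨fun i => if i = 0 then 1 else b, by simp⟩
              map_one' := by ext i; simp
              map_mul' := ?_ }, ?_, ?_⟩
    · intro d e
      ext
      show ((d.1 * e.1) 0)⁻¹ * (d.1 * e.1) 1 = ((d.1 0)⁻¹ * d.1 1) * ((e.1 0)⁻¹ * e.1 1)
      simp [mul_comm, mul_assoc, mul_left_comm]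
    · intro b c
      ext i
      show (if i = 0 then 1 else (b * c : A)) = (if i = 0 then 1 else (b : A)) * (if i = 0 then 1 else (c : A))
      split <;> simp
    · intro b
      refine ⟨⟨fun i => if i = 0 then 1 else b, by simp⟩, ?_⟩
      ext
      simp
    · intro b
      ext
      simp
end

section
/- Let M be a monoid, let A be an M-set, let B be a nonempty sub-M-set of A, and let θ be an equivalence relation on A that is M-invariant (if x θ y then (m·x) θ (m·y) for all m ∈ M) and satisfies: for every a ∈ A there exists b ∈ B with a θ b (i.e., the saturation of B by θ is all of A). Then B is a retract of a finite subdirect power of A: there exist a positive integer n, a sub-M-set D of A^n such that every coordinate projection D → A is surjective, a surjective M-equivariant map μ : D → B, and an M-equivariant map ν : B → D with μ ∘ ν = id_B. -/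
/-- Let `M` be a monoid, `A` an `M`-set, `B` a nonempty sub-`M`-set of `A`, and `θ` an
`M`-invariant equivalence relation on `A` whose saturation of `B` is all of `A` (every `a ∈ A`
is `θ`-related to some `b ∈ B`). Then `B` is a retract of a finite subdirect power of `A`. -/
theorem subMulAction_retract_of_saturation
    (M : Type*) [Monoid M] (A : Type*) [MulAction M A]
    (B : SubMulAction M A) (hB : (B : Set A).Nonempty)
    (θ : A → A → Prop) (hequiv : Equivalence θ)
    (hinv : ∀ (m : M) (x y : A), θ x y → θ (m • x) (m • y))
    (hsat : ∀ a : A, ∃ b ∈ B, θ a b) :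
    ∃ (n : ℕ), 0 < n ∧ ∃ D : SubMulAction M (Fin n → A),
      (∀ (i : Fin n) (a : A), ∃ d ∈ D, d i = a) ∧
      ∃ (μ : D →[M] B) (ν : B →[M] D),
        Function.Surjective μ ∧ ∀ b : B, μ (ν b) = b := by
  classical
  -- the predicate defining the subdirect power
  set P : (Fin 3 → A) → Prop := fun d =>
    (d 0 ∈ B ∧ d 0 = d 1 ∧ θ (d 0) (d 2)) ∨
    (d 1 ∈ B ∧ d 1 = d 2 ∧ θ (d 1) (d 0)) ∨
    (d 0 ∈ B ∧ d 0 = d 2 ∧ θ (d 0) (d 1)) with hPdef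
  have hsm : ∀ (m : M) (d : Fin 3 → A), P d → P (m • d) := by
    intro m d hd
    have e0 : (m • d) 0 = m • d 0 := rfl
    have e1 : (m • d) 1 = m • d 1 := rfl
    have e2 : (m • d) 2 = m • d 2 := rfl
    rcases hd with ⟨h1, h2, h3⟩ | ⟨h1, h2, h3⟩ | ⟨h1, h2, h3⟩
    · exact Or.inl ⟨by rw [e0]; exact B.smul_mem m h1, by rw [e0, e1, h2],
        by rw [e0, e2]; exact hinv m _ _ h3⟩
    · exact Or.inr (Or.inl ⟨by rw [e1]; exact B.smul_mem m h1, by rw [e1, e2, h2],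
        by rw [e1, e0]; exact hinv m _ _ h3⟩)
    · exact Or.inr (Or.inr ⟨by rw [e0]; exact B.smul_mem m h1, by rw [e0, e2, h2],
        by rw [e0, e1]; exact hinv m _ _ h3⟩)
  -- the value map picking out the B-representative
  set val : (Fin 3 → A) → A := fun d => if d 1 = d 2 then d 1 else d 0 with hvaldef
  have hvalB : ∀ d : Fin 3 → A, P d → val d ∈ B := by
    intro d hd
    rcases hd with ⟨h1, h2, h3⟩ | ⟨h1, h2, h3⟩ | ⟨h1, h2, h3⟩
    · by_cases h : d 1 = d 2
      · simp only [hvaldef, if_pos h]; rw [← h2]; exact h1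
      · simp only [hvaldef, if_neg h]; exact h1
    · simp only [hvaldef, if_pos h2]; exact h1
    · by_cases h : d 1 = d 2
      · simp only [hvaldef, if_pos h]; rw [h, ← h2]; exact h1
      · simp only [hvaldef, if_neg h]; exact h1
  have hvalsmul : ∀ (m : M) (d : Fin 3 → A), P d → val (m • d) = m • val d := by
    intro m d hd
    have e0 : (m • d) 0 = m • d 0 := rfl
    have e1 : (m • d) 1 = m • d 1 := rfl
    have e2 : (m • d) 2 = m • d 2 := rfl
    rcases hd with ⟨h1, h2, h3⟩ | ⟨h1, h2, h3⟩ | ⟨h1, h2, h3⟩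
    · -- d 0 = d 1 : both sides equal m • d 0
      have hr : m • val d = m • d 0 := by
        by_cases h : d 1 = d 2
        · simp only [hvaldef, if_pos h, h2]
        · simp only [hvaldef, if_neg h]
      rw [hr]
      by_cases h' : (m • d) 1 = (m • d) 2
      · simp only [hvaldef, if_pos h', e1, ← h2]
      · simp only [hvaldef, if_neg h', e0]
    · -- d 1 = d 2
      have h' : (m • d) 1 = (m • d) 2 := by rw [e1, e2, h2]
      simp only [hvaldef, if_pos h', if_pos h2, e1]
    · -- d 0 = d 2 : both sides equal m • d 0
      have hr : m • val d = m • d 0 := by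
        by_cases h : d 1 = d 2
        · simp only [hvaldef, if_pos h]; rw [h, ← h2]
        · simp only [hvaldef, if_neg h]
      rw [hr]
      by_cases h' : (m • d) 1 = (m • d) 2
      · simp only [hvaldef, if_pos h']; rw [e1] at h' ⊢; rw [h', e2, ← h2]
      · simp only [hvaldef, if_neg h', e0]
  refine ⟨3, by norm_num, ⟨{d | P d}, fun m {d} hd => hsm m d hd⟩, ?_, ?_⟩
  · -- subdirectness
    intro i a
    obtain ⟨b, hbB, hab⟩ := hsat a
    fin_cases i
    · refine ⟨![a, b, b], Or.inr (Or.inl ⟨?_, ?_, ?_⟩), ?_⟩ <;>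
        simp [hbB, hequiv.symm hab]
    · refine ⟨![b, a, b], Or.inr (Or.inr ⟨?_, ?_, ?_⟩), ?_⟩ <;>
        simp [hbB, hequiv.symm hab]
    · refine ⟨![b, b, a], Or.inl ⟨?_, ?_, ?_⟩, ?_⟩ <;>
        simp [hbB, hequiv.symm hab]
  · refine ⟨⟨fun d => ⟨val d.1, hvalB d.1 d.2⟩, fun m d => Subtype.ext (hvalsmul m d.1 d.2)⟩,
      ⟨fun b => ⟨fun _ => b.1, Or.inl ⟨b.2, rfl, hequiv.refl _⟩⟩, fun m b => rfl⟩, ?_, ?_⟩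
    · intro b
      refine ⟨⟨fun _ => b.1, Or.inl ⟨b.2, rfl, hequiv.refl _⟩⟩, ?_⟩
      exact Subtype.ext (if_pos rfl)
    · intro b
      exact Subtype.ext (if_pos rfl)
end

section
/- Let M be a monoid and let F be a property of M-sets such that: (i) if A has property F and f : A → C is a surjective M-equivariant map onto an M-set C, then C has property F; (ii) if A₁, …, A_n all have property F and D is a sub-M-set of the product A₁ × ⋯ × A_n (coordinatewise action) such that every coordinate projection D → A_i is surjective, then D has property F. Then F is closed under nonempty sub-M-sets: if A has property F and B is a nonempty sub-M-set of A, then B has property F. -/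
/-- Every formation of `M`-sets (unary algebras) is a pseudovariety: a property `F` of `M`-sets
closed under surjective `M`-equivariant images and under finite subdirect products is closed
under nonempty sub-`M`-sets. -/
theorem formation_of_mSets_is_hereditary
    (M : Type v) [Monoid M]
    (F : (X : Type u) → [inst : MulAction M X] → Prop)
    (hquot : ∀ (A C : Type u) [MulAction M A] [MulAction M C] (f : A →[M] C),
      Function.Surjective f → F A → F C)
    (hsub : ∀ (n : ℕ), 0 < n → ∀ (A : Fin n → Type u) [∀ i, MulAction M (A i)],
      (∀ i, F (A i)) → ∀ D : SubMulAction M (∀ i, A i),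
        (∀ (i : Fin n) (a : A i), ∃ d ∈ D, d i = a) → F D)
    (A : Type u) [MulAction M A] (hAF : F A)
    (B : SubMulAction M A) (hB : (B : Set A).Nonempty) :
    F B := by
  classical
  obtain ⟨b₀, hb₀⟩ := hB
  -- the subdirect sub-M-set of A³
  set D : SubMulAction M (∀ _ : Fin 3, A) :=
    { carrier := {x | (∀ m : M, m • (x 0) ≠ m • (x 1) → m • (x 0) ∈ B) ∧
        (∀ m : M, m • (x 0) = m • (x 1) → m • (x 2) ∈ B) ∧
        (∀ m k : M, m • (x 0) ≠ m • (x 1) → k • (m • (x 0)) = k • (m • (x 1)) →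
          k • (m • (x 2)) = k • (m • (x 0)))}
      smul_mem' := by
        intro c x hx
        obtain ⟨h1, h2, h3⟩ := hx
        refine ⟨fun m hm => ?_, fun m hm => ?_, fun m k hm hk => ?_⟩
        · have := h1 (m * c)
          simp only [mul_smul] at this
          exact this hm
        · have := h2 (m * c)
          simp only [mul_smul] at this
          exact this hm
        · have := h3 (m * c) k
          simp only [mul_smul] at this
          exact this hm hk } with hD
  have hDmem : ∀ x : ∀ _ : Fin 3, A, x ∈ D ↔
      ((∀ m : M, m • (x 0) ≠ m • (x 1) → m • (x 0) ∈ B) ∧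
        (∀ m : M, m • (x 0) = m • (x 1) → m • (x 2) ∈ B) ∧
        (∀ m k : M, m • (x 0) ≠ m • (x 1) → k • (m • (x 0)) = k • (m • (x 1)) →
          k • (m • (x 2)) = k • (m • (x 0)))) := fun x => Iff.rfl
  -- D is a subdirect product of three copies of A
  have hFD : F D := by
    refine hsub 3 (by norm_num) (fun _ => A) (fun _ => hAF) D ?_
    intro i a
    fin_cases i
    · refine ⟨fun j => if j = 2 then (b₀ : A) else a, ?_, by simp⟩
      rw [hDmem]
      refine ⟨fun m hm => absurd rfl hm, fun m _ => ?_, fun m k hm _ => absurd rfl hm⟩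
      · simpa using B.smul_mem m hb₀
    · refine ⟨fun j => if j = 2 then (b₀ : A) else a, ?_, by simp⟩
      rw [hDmem]
      refine ⟨fun m hm => absurd rfl hm, fun m _ => ?_, fun m k hm _ => absurd rfl hm⟩
      · simpa using B.smul_mem m hb₀
    · refine ⟨fun j => if j = 0 then (b₀ : A) else a, ?_, by simp⟩
      rw [hDmem]
      simp only [show ((0 : Fin 3) = 0) = True by simp, show ((1 : Fin 3) = 0) = False by simp,
        show ((2 : Fin 3) = 0) = False by simp, if_true, if_false]
      refine ⟨fun m _ => B.smul_mem m hb₀, fun m hm => ?_, fun m k _ hk => hk.symm ▸ rfl⟩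
      · rw [← hm]; exact B.smul_mem m hb₀
  -- the M-equivariant surjection D → B
  let g : D → B := fun d =>
    if h : (d : ∀ _ : Fin 3, A) 0 = (d : ∀ _ : Fin 3, A) 1 then
      ⟨(d : ∀ _ : Fin 3, A) 2, by
        have := ((hDmem _).mp d.2).2.1 1 (by simpa using h)
        simpa using this⟩
    else
      ⟨(d : ∀ _ : Fin 3, A) 0, by
        have := ((hDmem _).mp d.2).1 1 (by simpa using h)
        simpa using this⟩
  have hg : ∀ (m : M) (d : D), g (m • d) = m • g d := by
    intro m d
    have hcoe : ∀ i, ((m • d : D) : ∀ _ : Fin 3, A) i = m • ((d : ∀ _ : Fin 3, A) i) := by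
      intro i; rfl
    by_cases h1 : (d : ∀ _ : Fin 3, A) 0 = (d : ∀ _ : Fin 3, A) 1
    · have h2 : ((m • d : D) : ∀ _ : Fin 3, A) 0 = ((m • d : D) : ∀ _ : Fin 3, A) 1 := by
        rw [hcoe, hcoe, h1]
      simp only [g, dif_pos h1, dif_pos h2]
      apply Subtype.ext
      exact hcoe 2
    · by_cases h2 : ((m • d : D) : ∀ _ : Fin 3, A) 0 = ((m • d : D) : ∀ _ : Fin 3, A) 1
      · simp only [g, dif_pos h2, dif_neg h1]
        apply Subtype.ext
        have key := ((hDmem _).mp d.2).2.2 1 m (by simpa using h1)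
          (by rw [hcoe, hcoe] at h2; simpa using h2)
        simp only [one_smul] at key
        show ((m • d : D) : ∀ _ : Fin 3, A) 2 = m • ((d : ∀ _ : Fin 3, A) 0)
        rw [hcoe]
        exact key
      · simp only [g, dif_neg h1, dif_neg h2]
        apply Subtype.ext
        exact hcoe 0
  have hgsurj : Function.Surjective g := by
    rintro ⟨b, hbB⟩
    have hmem : (fun _ : Fin 3 => b) ∈ D := by
      rw [hDmem]
      exact ⟨fun m hm => absurd rfl hm, fun m _ => B.smul_mem m hbB,
        fun m k hm _ => absurd rfl hm⟩
    refine ⟨⟨fun _ => b, hmem⟩, ?_⟩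
    simp only [g, dif_pos rfl]
  exact hquot D B ⟨g, hg⟩ hgsurj hFD
end

section
/- Let A₅ denote the alternating group on 5 letters. Let n be a positive integer, let D be a subgroup of (A₅)^n such that every coordinate projection D → A₅ is surjective, and let μ : D → G be a surjective group homomorphism. Then G is isomorphic to (A₅)^k for some natural number k (where (A₅)^0 is the trivial group). -/
section SubdirectA5Aux
open Function

def resHom (S : Type*) [Group S] (n : ℕ) : (Fin (n+1) → S) →* (Fin n → S) :=
  Pi.monoidHom fun i => Pi.evalMonoidHom (fun _ => S) i.castSucc

lemma eq_mulSingle_of_res_eq_one {S : Type*} [Group S] {n : ℕ} {d : Fin (n+1) → S}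
    (h : resHom S n d = 1) : d = Pi.mulSingle (Fin.last n) (d (Fin.last n)) := by
  funext i
  induction i using Fin.lastCases with
  | last => simp
  | cast i =>
    have h1 : d i.castSucc = 1 := congrFun h i
    rw [h1, Pi.mulSingle_eq_of_ne (Fin.castSucc_lt_last i).ne]

def extHom (S : Type*) [Group S] (n : ℕ) : (Fin n → S) →* (Fin (n+1) → S) where
  toFun x := Fin.snoc x 1
  map_one' := by
    funext i
    induction i using Fin.lastCases <;> simp
  map_mul' x y := by
    funext i
    induction i using Fin.lastCases <;> simp

def snocEquiv (S : Type*) [Group S] (k : ℕ) : ((Fin k → S) × S) ≃* (Fin (k+1) → S) where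
  toFun p := Fin.snoc p.1 p.2
  invFun f := (fun i => f i.castSucc, f (Fin.last k))
  left_inv p := by simp
  right_inv f := by
    funext i
    induction i using Fin.lastCases <;> simp
  map_mul' p q := by
    funext i
    induction i using Fin.lastCases <;> simp

lemma lift_comp_symm_apply {A B C : Type*} [Group A] [Group B] [Group C]
    (f : A →* B) (hf : Function.Surjective f) (g : A →* C) (hle : f.ker ≤ g.ker) (a : A) :
    ((QuotientGroup.lift f.ker g hle).comp
      (QuotientGroup.quotientKerEquivOfSurjective f hf).symm.toMonoidHom) (f a) = g a := by
  have h1 : (QuotientGroup.quotientKerEquivOfSurjective f hf) (QuotientGroup.mk a) = f a := rfl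
  simp only [MonoidHom.comp_apply, MulEquiv.coe_toMonoidHom, ← h1, MulEquiv.symm_apply_apply]
  rfl

universe u

theorem main_subdirect {S : Type*} [Group S] [IsSimpleGroup S]
    (hna : ∃ a b : S, a * b ≠ b * a) :
    ∀ (n : ℕ) (D : Subgroup (Fin n → S)) (_ : ∀ i a, ∃ d ∈ D, d i = a)
      (G : Type u) [Group G] (μ : ↥D →* G) (_ : Function.Surjective μ),
      ∃ k : ℕ, Nonempty (G ≃* (Fin k → S)) := by
  intro n
  induction n with
  | zero =>
    intro D hD G _ μ hμ
    have hsub : Subsingleton G := by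
      constructor
      intro a b
      obtain ⟨x, rfl⟩ := hμ a
      obtain ⟨y, rfl⟩ := hμ b
      congr 1
      exact Subtype.ext (Subsingleton.elim _ _)
    refine ⟨0, ⟨{
      toFun := fun _ => 1
      invFun := fun _ => 1
      left_inv := fun _ => Subsingleton.elim _ _
      right_inv := fun _ => Subsingleton.elim _ _
      map_mul' := fun _ _ => Subsingleton.elim _ _ }⟩⟩
  | succ n IH =>
    intro D hD G _ μ hμ
    set res := resHom S n with hres
    set D0 := D.map res with hD0def
    have hresapp : ∀ (d : Fin (n+1) → S) (i : Fin n), res d i = d i.castSucc := fun _ _ => rfl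
    have hD0 : ∀ i a, ∃ x ∈ D0, x i = a := by
      intro i a
      obtain ⟨d, hdD, hdi⟩ := hD i.castSucc a
      exact ⟨res d, Subgroup.mem_map_of_mem res hdD, hdi⟩
    by_cases hfull : ∀ s : S, Pi.mulSingle (Fin.last n) s ∈ D
    · -- the last coordinate's copy of S is inside D
      let jD : S →* ↥D := (MonoidHom.mulSingle (fun _ => S) (Fin.last n)).codRestrict D hfull
      have hjD : ∀ s : S, (↑(jD s) : Fin (n+1) → S) = Pi.mulSingle (Fin.last n) s := fun _ => rfl
      rcases ((μ.comp jD).normal_ker).eq_bot_or_eq_top with hker | hker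
      · -- μ is injective on the copy of S: G ≅ (quotient of E) × S
        have hinjj : ∀ s : S, μ (jD s) = 1 → s = 1 := by
          intro s hs
          have : s ∈ (μ.comp jD).ker := hs
          rw [hker] at this
          exact this
        -- the evaluation at the last coordinate, on D
        let q : ↥D →* S := (Pi.evalMonoidHom (fun _ => S) (Fin.last n)).comp D.subtype
        have hqapp : ∀ d : ↥D, q d = (↑d : Fin (n+1) → S) (Fin.last n) := fun _ => rfl
        have hq : Function.Surjective q := by
          intro a
          obtain ⟨d, hdD, hd⟩ := hD (Fin.last n) a
          exact ⟨⟨d, hdD⟩, hd⟩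
        have hcenter : Subgroup.center S = ⊥ := by
          have hcn : (Subgroup.center S).Normal := by infer_instance
          rcases hcn.eq_bot_or_eq_top with h | h
          · exact h
          · exfalso
            obtain ⟨a, b, hab⟩ := hna
            exact hab ((Subgroup.mem_center_iff.mp (h ▸ Subgroup.mem_top a) b).symm)
        have hkerle : μ.ker ≤ q.ker := by
          intro x hx
          have hxμ : μ x = 1 := hx
          have hc : ∀ s : S, ((↑x : Fin (n+1) → S) (Fin.last n)) * s
              = s * ((↑x : Fin (n+1) → S) (Fin.last n)) := by
            intro s
            have hmem : x⁻¹ * (jD s)⁻¹ * x * jD s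
                = jD (((↑x : Fin (n+1) → S) (Fin.last n))⁻¹ * s⁻¹
                    * ((↑x : Fin (n+1) → S) (Fin.last n)) * s) := by
              apply Subtype.ext
              funext i
              induction i using Fin.lastCases with
              | last => simp [hjD]
              | cast i =>
                simp [hjD, Pi.mulSingle_eq_of_ne (Fin.castSucc_lt_last i).ne]
            have h2 : μ (x⁻¹ * (jD s)⁻¹ * x * jD s) = 1 := by
              simp [map_mul, map_inv, hxμ]
            rw [hmem] at h2
            have h3 := hinjj _ h2
            have h4 : ((↑x : Fin (n+1) → S) (Fin.last n))⁻¹ * s⁻¹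
                * ((↑x : Fin (n+1) → S) (Fin.last n)) * s = 1 := h3
            -- derive commutation
            have h5 : s⁻¹ * ((↑x : Fin (n+1) → S) (Fin.last n)) * s
                = (↑x : Fin (n+1) → S) (Fin.last n) := by
              have h6 : ((↑x : Fin (n+1) → S) (Fin.last n))⁻¹
                  * (s⁻¹ * ((↑x : Fin (n+1) → S) (Fin.last n)) * s) = 1 := by
                rw [← h4]; group
              exact (inv_mul_eq_one.mp h6).symm
            calc ((↑x : Fin (n+1) → S) (Fin.last n)) * s
                = s * (s⁻¹ * ((↑x : Fin (n+1) → S) (Fin.last n)) * s) := by group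
              _ = s * ((↑x : Fin (n+1) → S) (Fin.last n)) := by rw [h5]
          have hxc : (↑x : Fin (n+1) → S) (Fin.last n) ∈ Subgroup.center S :=
            Subgroup.mem_center_iff.mpr fun g => (hc g).symm
          rw [hcenter] at hxc
          exact hxc
        -- ν : G →* S, the induced evaluation at the last coordinate
        let ν : G →* S := (QuotientGroup.lift μ.ker q hkerle).comp
          (QuotientGroup.quotientKerEquivOfSurjective μ hμ).symm.toMonoidHom
        have hν : ∀ d : ↥D, ν (μ d) = q d := fun d => lift_comp_symm_apply μ hμ q hkerle d
        -- the subgroup of D with trivial last coordinate, viewed inside Fin n → S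
        set evalL := Pi.evalMonoidHom (fun _ : Fin (n+1) => S) (Fin.last n) with hevalL
        set E : Subgroup (Fin n → S) := (D ⊓ evalL.ker).map res with hEdef
        have hE : ∀ i a, ∃ x ∈ E, x i = a := by
          intro i a
          obtain ⟨d, hdD, hdi⟩ := hD i.castSucc a
          set d' : Fin (n+1) → S := d * Pi.mulSingle (Fin.last n) ((d (Fin.last n))⁻¹)
            with hd'def
          refine ⟨res d', Subgroup.mem_map.mpr
            ⟨d', Subgroup.mem_inf.mpr ⟨mul_mem hdD (hfull _), ?_⟩, rfl⟩, ?_⟩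
          · rw [MonoidHom.mem_ker]
            show d' (Fin.last n) = 1
            rw [hd'def]
            simp
          · show d' i.castSucc = a
            rw [hd'def]
            simp [Pi.mulSingle_eq_of_ne (Fin.castSucc_lt_last i).ne, hdi]
        have hext : ∀ x : ↥E, Fin.snoc (↑x : Fin n → S) (1:S) ∈ D := by
          intro x
          obtain ⟨d, hd, hdx⟩ := Subgroup.mem_map.mp x.2
          obtain ⟨hdD, hdk⟩ := Subgroup.mem_inf.mp hd
          have hdl : d (Fin.last n) = 1 := MonoidHom.mem_ker.mp hdk
          have heq : Fin.snoc (↑x : Fin n → S) (1:S) = d := by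
            funext i
            induction i using Fin.lastCases with
            | last => simp [hdl]
            | cast i => rw [Fin.snoc_castSucc, ← hdx]; rfl
          rw [heq]; exact hdD
        let ι : ↥E →* ↥D := MonoidHom.codRestrict ((extHom S n).comp E.subtype) D hext
        have hι : ∀ x : ↥E, (↑(ι x) : Fin (n+1) → S) = Fin.snoc (↑x : Fin n → S) 1 :=
          fun _ => rfl
        have hq_ι : ∀ x : ↥E, q (ι x) = 1 := by
          intro x; rw [hqapp, hι]; simp
        let μ1 : ↥E →* ↥ν.ker := MonoidHom.codRestrict (μ.comp ι) ν.ker (by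
          intro x
          rw [MonoidHom.mem_ker]
          show ν (μ (ι x)) = 1
          rw [hν, hq_ι])
        have hμ1 : Function.Surjective μ1 := by
          rintro ⟨g, hg⟩
          obtain ⟨d, rfl⟩ := hμ g
          have hdl : (↑d : Fin (n+1) → S) (Fin.last n) = 1 := by
            have h1 : ν (μ d) = 1 := MonoidHom.mem_ker.mp hg
            rw [hν, hqapp] at h1
            exact h1
          refine ⟨⟨res ↑d, Subgroup.mem_map.mpr
            ⟨↑d, Subgroup.mem_inf.mpr ⟨d.2, MonoidHom.mem_ker.mpr hdl⟩, rfl⟩⟩, ?_⟩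
          apply Subtype.ext
          show μ (ι _) = μ d
          congr 1
          apply Subtype.ext
          rw [hι]
          funext i
          induction i using Fin.lastCases with
          | last => simp [hdl]
          | cast i => rw [Fin.snoc_castSucc]; rfl
        obtain ⟨k, ⟨e⟩⟩ := IH E hE ↥ν.ker μ1 hμ1
        -- the image of the last copy of S in G
        set T : Subgroup G := (μ.comp jD).range with hTdef
        have hTnormal : T.Normal := by
          constructor
          intro t ht g
          obtain ⟨s, rfl⟩ := MonoidHom.mem_range.mp ht
          obtain ⟨d, rfl⟩ := hμ g
          have hc : d * jD s * d⁻¹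
              = jD ((↑d : Fin (n+1) → S) (Fin.last n) * s
                  * (((↑d : Fin (n+1) → S)) (Fin.last n))⁻¹) := by
            apply Subtype.ext
            funext i
            induction i using Fin.lastCases with
            | last => simp [hjD]
            | cast i => simp [hjD, Pi.mulSingle_eq_of_ne (Fin.castSucc_lt_last i).ne]
          have h1 : μ d * (μ.comp jD) s * (μ d)⁻¹ = μ (d * jD s * d⁻¹) := by
            rw [map_mul, map_mul, map_inv]; rfl
          rw [h1, hc]
          exact MonoidHom.mem_range.mpr ⟨_, rfl⟩
        have hdis : Disjoint ν.ker T := by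
          rw [Subgroup.disjoint_def]
          intro y hy1 hy2
          obtain ⟨s, rfl⟩ := MonoidHom.mem_range.mp hy2
          have h1 : ν ((μ.comp jD) s) = s := by
            show ν (μ (jD s)) = s
            rw [hν, hqapp, hjD]
            simp
          have hs1 : s = 1 := by rw [← h1]; exact MonoidHom.mem_ker.mp hy1
          rw [hs1, map_one]
        have hdisj : ∀ g ∈ ν.ker, ∀ t ∈ T, Commute g t := fun g hg t ht =>
          Subgroup.commute_of_normal_of_disjoint ν.ker T (MonoidHom.normal_ker ν) hTnormal
            hdis g t hg ht
        let Φ : ↥ν.ker × S →* G := MonoidHom.mk' (fun p => ↑p.1 * μ (jD p.2)) (by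
          rintro ⟨a1, a2⟩ ⟨b1, b2⟩
          show ↑(a1 * b1) * μ (jD (a2 * b2)) = (↑a1 * μ (jD a2)) * (↑b1 * μ (jD b2))
          have hcomm : Commute (↑b1 : G) (μ (jD a2)) :=
            hdisj ↑b1 b1.2 (μ (jD a2)) (MonoidHom.mem_range.mpr ⟨a2, rfl⟩)
          rw [Subgroup.coe_mul, map_mul, map_mul]
          exact hcomm.mul_mul_mul_comm _ _)
        have hΦbij : Function.Bijective Φ := by
          constructor
          · rw [injective_iff_map_eq_one]
            rintro ⟨h, s⟩ hp
            have hp' : ↑h * μ (jD s) = 1 := hp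
            have hs : s = 1 := by
              have h1 : ν (↑h * μ (jD s)) = s := by
                rw [map_mul, MonoidHom.mem_ker.mp h.2, one_mul, hν, hqapp, hjD]
                simp
              rw [hp', map_one] at h1
              exact h1.symm
            have hh : (h : G) = 1 := by
              rw [hs] at hp'
              simpa using hp'
            exact Prod.ext (Subtype.ext hh) hs
          · intro g
            have h1 : ν (μ (jD (ν g))) = ν g := by
              rw [hν, hqapp, hjD]; simp
            refine ⟨(⟨g * (μ (jD (ν g)))⁻¹, ?_⟩, ν g), ?_⟩
            · rw [MonoidHom.mem_ker, map_mul, map_inv, h1, mul_inv_cancel]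
            · show g * (μ (jD (ν g)))⁻¹ * μ (jD (ν g)) = g
              simp
        exact ⟨k + 1, ⟨((MulEquiv.ofBijective Φ hΦbij).symm.trans
          (MulEquiv.prodCongr e (MulEquiv.refl S))).trans (snocEquiv S k)⟩⟩
      · -- μ kills the copy of S: factor through D0
        have hkill : ∀ s : S, μ (jD s) = 1 := by
          intro s
          have : s ∈ (μ.comp jD).ker := by rw [hker]; trivial
          exact this
        have hp : Function.Surjective (res.subgroupMap D) := res.subgroupMap_surjective D
        have hkerp : (res.subgroupMap D).ker ≤ μ.ker := by
          intro d hd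
          have h1 : res (↑d : Fin (n+1) → S) = 1 := congrArg Subtype.val hd
          have h2 : (↑d : Fin (n+1) → S)
              = Pi.mulSingle (Fin.last n) ((↑d : Fin (n+1) → S) (Fin.last n)) :=
            eq_mulSingle_of_res_eq_one h1
          have h3 : d = jD ((↑d : Fin (n+1) → S) (Fin.last n)) := Subtype.ext h2
          show μ d = 1
          rw [h3]
          exact hkill _
        let μ0 : ↥D0 →* G := (QuotientGroup.lift (res.subgroupMap D).ker μ hkerp).comp
          (QuotientGroup.quotientKerEquivOfSurjective (res.subgroupMap D) hp).symm.toMonoidHom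
        have hμ0 : Function.Surjective μ0 := by
          intro g
          obtain ⟨d, rfl⟩ := hμ g
          exact ⟨res.subgroupMap D d, lift_comp_symm_apply (res.subgroupMap D) hp μ hkerp d⟩
        exact IH D0 hD0 G μ0 hμ0
    · -- D meets the last copy of S trivially: D ≅ D0
      push_neg at hfull
      let NS : Subgroup S := (D ⊓ res.ker).map (Pi.evalMonoidHom (fun _ => S) (Fin.last n))
      have hNSnormal : NS.Normal := by
        constructor
        intro x hx g
        obtain ⟨d, hd, rfl⟩ := Subgroup.mem_map.mp hx
        obtain ⟨hdD, hdk⟩ := Subgroup.mem_inf.mp hd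
        obtain ⟨e, heD, he⟩ := hD (Fin.last n) g
        refine Subgroup.mem_map.mpr ⟨e * d * e⁻¹,
          Subgroup.mem_inf.mpr ⟨mul_mem (mul_mem heD hdD) (inv_mem heD), ?_⟩, ?_⟩
        · have hdk' : res d = 1 := MonoidHom.mem_ker.mp hdk
          show e * d * e⁻¹ ∈ res.ker
          rw [MonoidHom.mem_ker]
          show res (e * d * e⁻¹) = 1
          rw [map_mul, map_mul, map_inv, hdk', mul_one, mul_inv_cancel]
        · show (e * d * e⁻¹) (Fin.last n) = g * d (Fin.last n) * g⁻¹
          simp [he]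
      rcases hNSnormal.eq_bot_or_eq_top with hbot | htop
      · have hinj : Function.Injective (res.subgroupMap D) := by
          rw [injective_iff_map_eq_one]
          intro d hd
          have h1 : res (↑d : Fin (n+1) → S) = 1 := congrArg Subtype.val hd
          have h2 : (↑d : Fin (n+1) → S) (Fin.last n) ∈ NS :=
            Subgroup.mem_map.mpr ⟨↑d, Subgroup.mem_inf.mpr ⟨d.2, MonoidHom.mem_ker.mpr h1⟩, rfl⟩
          rw [hbot, Subgroup.mem_bot] at h2
          have h3 : (↑d : Fin (n+1) → S)
              = Pi.mulSingle (Fin.last n) ((↑d : Fin (n+1) → S) (Fin.last n)) :=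
            eq_mulSingle_of_res_eq_one h1
          apply Subtype.ext
          rw [h3, h2]
          simp
        let e := MulEquiv.ofBijective (res.subgroupMap D) ⟨hinj, res.subgroupMap_surjective D⟩
        exact IH D0 hD0 G (μ.comp e.symm.toMonoidHom) (hμ.comp e.symm.surjective)
      · exfalso
        obtain ⟨s, hs⟩ := hfull
        have : s ∈ NS := by rw [htop]; trivial
        obtain ⟨d, hd, hds⟩ := Subgroup.mem_map.mp this
        obtain ⟨hdD, hdk⟩ := Subgroup.mem_inf.mp hd
        have h1 : res d = 1 := MonoidHom.mem_ker.mp hdk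
        have h2 : d = Pi.mulSingle (Fin.last n) (d (Fin.last n)) := eq_mulSingle_of_res_eq_one h1
        apply hs
        rw [← hds]
        rw [h2] at hdD
        exact hdD


end SubdirectA5Aux

/-- Every homomorphic image of a finite subdirect power of the alternating group `A₅` is
isomorphic to a finite direct power of `A₅`. -/
theorem image_of_subdirect_power_of_A5_is_power_of_A5
    (n : ℕ) (hn : 0 < n)
    (D : Subgroup (Fin n → alternatingGroup (Fin 5)))
    (hD : ∀ (i : Fin n) (a : alternatingGroup (Fin 5)), ∃ d ∈ D, d i = a)
    (G : Type*) [Group G] (μ : D →* G) (hμ : Function.Surjective μ) :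
    ∃ k : ℕ, Nonempty (G ≃* (Fin k → alternatingGroup (Fin 5))) := by
  have hna : ∃ a b : alternatingGroup (Fin 5), a * b ≠ b * a := by
    refine ⟨⟨Equiv.swap 0 1 * Equiv.swap 1 2, by
        simp [Equiv.Perm.mem_alternatingGroup, Equiv.Perm.sign_swap]⟩,
      ⟨Equiv.swap 0 1 * Equiv.swap 1 3, by
        simp [Equiv.Perm.mem_alternatingGroup, Equiv.Perm.sign_swap]⟩, ?_⟩
    intro h
    have := congrArg (fun x : alternatingGroup (Fin 5) => (x : Equiv.Perm (Fin 5)) 0) h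
    revert this
    decide
  exact main_subdirect hna n D hD G μ hμ
end

section
/- Let 𝔸 = ⟨ZMod 6; +, s, c⟩ where + is addition modulo 6, s(0) = s(3) = 0, s(1) = s(2) = s(4) = s(5) = 3, and c = 3, and let 𝔹 be the subalgebra of 𝔸 with universe {0, 3}. Then 𝔹 is not a homomorphic image of any finite subdirect power of 𝔸. Precisely: there do not exist a positive integer n, an additive subgroup D of the functions Fin n → ZMod 6 that contains the constant function 3, is closed under coordinatewise application of s, and has all coordinate projections D → ZMod 6 surjective, and a map μ : D → ZMod 6 such that (i) μ(d + d') = μ(d) + μ(d') for all d, d' ∈ D, (ii) μ(d') = s(μ(d)) whenever d ∈ D and d' is the coordinatewise application of s to d, (iii) μ(constant 3) = 3, and (iv) μ(d) ∈ {0, 3} for all d ∈ D. -/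
/-- The unary operation `s` of the algebra `𝔸 = ⟨ZMod 6; +, s, 3⟩`:
`s 0 = s 3 = 0` and `s x = 3` for `x ∈ {1, 2, 4, 5}`. -/
def sOp : ZMod 6 → ZMod 6 := fun x => if x = 0 ∨ x = 3 then 0 else 3

lemma sOp_vals : ∀ a : ZMod 6, sOp a = 0 ∨ sOp a = 3 := by decide

lemma sOp_of_B : ∀ a : ZMod 6, (a = 0 ∨ a = 3) → sOp a = 0 := by decide

lemma sOp_mul_key : ∀ a b : ZMod 6,
    sOp a + sOp b + sOp a * sOp b = sOp a + sOp b + sOp (a + b) + sOp (a + (b + b)) := by decide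

lemma join_add_key : ∀ a c b : ZMod 6,
    (a + c) + sOp b + (a + c) * sOp b
      = ((a + sOp b + a * sOp b) + (c + sOp b + c * sOp b)) + sOp b := by decide

lemma neg_of_B : ∀ a : ZMod 6, (a = 0 ∨ a = 3) → -a = a := by decide

lemma add_of_B : ∀ a b : ZMod 6, (a = 0 ∨ a = 3) → (b = 0 ∨ b = 3) → (a + b = 0 ∨ a + b = 3) := by
  decide

lemma join_three : ∀ b : ZMod 6, (3 : ZMod 6) + sOp b + 3 * sOp b = 3 := by decide

lemma join_one : ∀ a : ZMod 6, (a = 0 ∨ a = 3) → a + sOp 1 + a * sOp 1 = 3 := by decide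

/-- The two-element subalgebra `𝔹 = ⟨{0, 3}; +, s, 3⟩` of `𝔸 = ⟨ZMod 6; +, s, 3⟩` is not a
homomorphic image of any finite subdirect power of `𝔸`. -/
theorem B_not_image_of_finite_subdirect_power_of_A :
    ¬ ∃ (n : ℕ), 0 < n ∧ ∃ (D : AddSubgroup (Fin n → ZMod 6))
      (μ : (Fin n → ZMod 6) → ZMod 6),
        ((fun _ => (3 : ZMod 6)) ∈ D) ∧
        (∀ d ∈ D, (fun i => sOp (d i)) ∈ D) ∧
        (∀ (i : Fin n) (a : ZMod 6), ∃ d ∈ D, d i = a) ∧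
        (∀ d ∈ D, ∀ d' ∈ D, μ (d + d') = μ d + μ d') ∧
        (∀ d ∈ D, μ (fun i => sOp (d i)) = sOp (μ d)) ∧
        (μ (fun _ => (3 : ZMod 6)) = 3) ∧
        (∀ d ∈ D, μ d = 0 ∨ μ d = 3) := by
  rintro ⟨n, hn, D, μ, h3, hs, hsub, hadd, hμs, hμ3, hμB⟩
  set Sgen : Set (Fin n → ZMod 6) := {w | ∃ x ∈ D, w = fun i => sOp (x i)} with hSgen
  set Sp : AddSubgroup (Fin n → ZMod 6) := AddSubgroup.closure Sgen with hSp
  have hgen : ∀ x ∈ D, (fun i => sOp (x i)) ∈ Sp := fun x hx =>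
    AddSubgroup.subset_closure ⟨x, hx, rfl⟩
  have hμ0 : μ 0 = 0 := by
    have h : μ 0 = μ 0 + μ 0 := by simpa using hadd 0 D.zero_mem 0 D.zero_mem
    exact (left_eq_add.mp h)
  -- Every element of Sp lies in D, is {0,3}-valued, and is killed by μ.
  have hK : ∀ w ∈ Sp, w ∈ D ∧ (∀ i, w i = 0 ∨ w i = 3) ∧ μ w = 0 := by
    intro w hw
    refine AddSubgroup.closure_induction (k := Sgen)
      (p := fun w _ => w ∈ D ∧ (∀ i, w i = 0 ∨ w i = 3) ∧ μ w = 0) ?_ ?_ ?_ ?_ hw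
    · rintro w ⟨x, hx, rfl⟩
      refine ⟨hs x hx, fun i => sOp_vals _, ?_⟩
      rw [hμs x hx]
      exact sOp_of_B _ (hμB x hx)
    · exact ⟨D.zero_mem, fun i => Or.inl rfl, hμ0⟩
    · rintro x y hx hy ⟨hxD, hxB, hxμ⟩ ⟨hyD, hyB, hyμ⟩
      refine ⟨D.add_mem hxD hyD, fun i => add_of_B _ _ (hxB i) (hyB i), ?_⟩
      rw [hadd x hxD y hyD, hxμ, hyμ, add_zero]
    · rintro x hx ⟨hxD, hxB, hxμ⟩
      have hneg : -x = x := by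
        funext i
        simpa using neg_of_B _ (hxB i)
      rw [hneg]
      exact ⟨hxD, hxB, hxμ⟩
  -- the join operation
  have hjoin : ∀ d ∈ D, ∀ w ∈ Sp,
      (fun i => w i + sOp (d i) + w i * sOp (d i)) ∈ Sp := by
    intro d hd w hw
    have key : ∀ w ∈ Sp, w ∈ Sp ∧ (fun i => w i + sOp (d i) + w i * sOp (d i)) ∈ Sp := by
      intro w hw
      refine AddSubgroup.closure_induction (k := Sgen)
        (p := fun w _ => w ∈ Sp ∧ (fun i => w i + sOp (d i) + w i * sOp (d i)) ∈ Sp)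
        ?_ ?_ ?_ ?_ hw
      · rintro w ⟨x, hx, rfl⟩
        refine ⟨hgen x hx, ?_⟩
        have : (fun i => sOp (x i) + sOp (d i) + sOp (x i) * sOp (d i))
            = ((fun i => sOp (x i)) + (fun i => sOp (d i)))
              + ((fun i => sOp ((x + d) i)) + (fun i => sOp ((x + (d + d)) i))) := by
          funext i
          have := sOp_mul_key (x i) (d i)
          simp only [Pi.add_apply]
          rw [this]
          ring
        rw [this]
        exact Sp.add_mem (Sp.add_mem (hgen x hx) (hgen d hd))
          (Sp.add_mem (hgen _ (D.add_mem hx hd)) (hgen _ (D.add_mem hx (D.add_mem hd hd))))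
      · constructor
        · exact Sp.zero_mem
        · have : (fun i => (0 : Fin n → ZMod 6) i + sOp (d i)
                + (0 : Fin n → ZMod 6) i * sOp (d i)) = (fun i => sOp (d i)) := by
            funext i
            simp
          rw [this]
          exact hgen d hd
      · rintro x y hx hy ⟨hxS, hxJ⟩ ⟨hyS, hyJ⟩
        refine ⟨Sp.add_mem hxS hyS, ?_⟩
        have : (fun i => (x + y) i + sOp (d i) + (x + y) i * sOp (d i))
            = ((fun i => x i + sOp (d i) + x i * sOp (d i))
                + (fun i => y i + sOp (d i) + y i * sOp (d i)))
              + (fun i => sOp (d i)) := by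
          funext i
          simp only [Pi.add_apply]
          exact join_add_key (x i) (y i) (d i)
        rw [this]
        exact Sp.add_mem (Sp.add_mem hxJ hyJ) (hgen d hd)
      · rintro x hx ⟨hxS, hxJ⟩
        have hxB := (hK x hxS).2.1
        have hneg : -x = x := by
          funext i
          simpa using neg_of_B _ (hxB i)
        rw [hneg]
        exact ⟨hxS, hxJ⟩
    exact (key w hw).2
  -- induction: build an element of Sp which is 3 on the first k coordinates
  have main : ∀ k : ℕ, k ≤ n → ∃ w ∈ Sp, ∀ i : Fin n, i.val < k → w i = 3 := by
    intro k
    induction k with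
    | zero => exact fun _ => ⟨0, Sp.zero_mem, fun i hi => absurd hi (Nat.not_lt_zero _)⟩
    | succ k ih =>
      intro hk
      obtain ⟨w, hwS, hw⟩ := ih (Nat.le_of_succ_le hk)
      obtain ⟨e, he, hek⟩ := hsub ⟨k, hk⟩ 1
      refine ⟨fun i => w i + sOp (e i) + w i * sOp (e i), hjoin e he w hwS, ?_⟩
      intro i hi
      show w i + sOp (e i) + w i * sOp (e i) = 3
      rcases Nat.lt_or_ge i.val k with h | h
      · rw [hw i h]
        exact join_three (e i)
      · have hik : i = ⟨k, hk⟩ := by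
          apply Fin.ext
          show i.val = k
          omega
        rw [hik, hek]
        exact join_one _ ((hK w hwS).2.1 ⟨k, hk⟩)
  obtain ⟨w, hwS, hw⟩ := main n le_rfl
  have hwc : w = (fun _ => (3 : ZMod 6)) := by
    funext i
    exact hw i i.isLt
  have := (hK w hwS).2.2
  rw [hwc, hμ3] at this
  exact absurd this (by decide)
end

section
/- Let n be a positive integer and let D be an additive subgroup of the functions Fin n → ZMod 6 that contains the constant function 3, is closed under coordinatewise application of s, and has all coordinate projections D → ZMod 6 surjective. Let I ⊆ D be a subset that is closed under subtraction and contains 0 (an additive subgroup of D), such that for all d, d' ∈ D, if d − d' ∈ I then (s∘d) − (s∘d') ∈ I (here s∘d denotes coordinatewise application of s). Suppose I has index at most 2 in D, i.e., there exists d₀ ∈ D such that every d ∈ D satisfies d ∈ I or d − d₀ ∈ I. Then the constant function 3 belongs to I. -/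
open Finset


lemma fiber_card_eq (m : ℕ) (c : Fin m → ZMod 3) (j₀ : Fin m) (hj : c j₀ ≠ 0)
    (a b : ZMod 3) :
    (univ.filter fun μ : Fin m → ZMod 3 => ∑ j, μ j * c j = a).card
      = (univ.filter fun μ : Fin m → ZMod 3 => ∑ j, μ j * c j = b).card := by
  set ν : Fin m → ZMod 3 := fun j => if j = j₀ then (b - a) * (c j₀)⁻¹ else 0 with hν
  have hfν : ∑ j, ν j * c j = b - a := by
    rw [Finset.sum_eq_single j₀]
    · simp [hν, mul_assoc, inv_mul_cancel₀ hj]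
    · intro k _ hk; simp [hν, hk]
    · simp
  have hsum : ∀ μ : Fin m → ZMod 3, ∑ j, (μ j + ν j) * c j = (∑ j, μ j * c j) + (b - a) := by
    intro μ
    rw [← hfν, ← Finset.sum_add_distrib]
    exact Finset.sum_congr rfl fun j _ => add_mul _ _ _
  apply Finset.card_bij' (fun μ _ => μ + ν) (fun μ _ => μ - ν)
  · intro μ hμ
    simp only [mem_filter, mem_univ, true_and] at hμ ⊢
    have h1 := hsum μ
    simp only [Pi.add_apply]
    linear_combination h1 + hμ
  · intro μ hμ
    simp only [mem_filter, mem_univ, true_and] at hμ ⊢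
    have h2 := hsum (μ - ν)
    simp only [Pi.sub_apply, sub_add_cancel] at h2
    simp only [Pi.sub_apply]
    linear_combination hμ - h2
  · intro μ _; simp
  · intro μ _; simp


lemma fiber_card_odd (m : ℕ) (c : Fin m → ZMod 3) (hc : c ≠ 0) (a : ZMod 3) :
    Odd (univ.filter fun μ : Fin m → ZMod 3 => ∑ j, μ j * c j = a).card := by
  obtain ⟨j₀, hj₀⟩ := Function.ne_iff.mp hc
  have hpart : (univ : Finset (Fin m → ZMod 3)).card
      = ∑ b : ZMod 3, (univ.filter fun μ : Fin m → ZMod 3 => ∑ j, μ j * c j = b).card :=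
    Finset.card_eq_sum_card_fiberwise (fun μ _ => Finset.mem_univ _)
  have heq : ∀ b : ZMod 3, (univ.filter fun μ : Fin m → ZMod 3 => ∑ j, μ j * c j = b).card
      = (univ.filter fun μ : Fin m → ZMod 3 => ∑ j, μ j * c j = a).card :=
    fun b => fiber_card_eq m c j₀ hj₀ b a
  have h3 : (univ : Finset (Fin m → ZMod 3)).card
      = 3 * (univ.filter fun μ : Fin m → ZMod 3 => ∑ j, μ j * c j = a).card := by
    rw [hpart]
    simp [heq, Finset.sum_const, Finset.card_univ]

  have hodd : Odd (univ : Finset (Fin m → ZMod 3)).card := by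
    simp [Finset.card_univ]
    exact Odd.pow (by decide)
  rw [h3, Nat.odd_mul] at hodd
  exact hodd.2

lemma exists_lambda (m : ℕ) : ∃ Λ : Finset (Fin m → ZMod 3),
    ∀ c : Fin m → ZMod 3, c ≠ 0 →
      Odd (Λ.filter fun l => ∑ j, l j * c j ≠ 0).card := by
  induction m with
  | zero =>
    refine ⟨∅, fun c hc => absurd (funext fun j => j.elim0) hc⟩
  | succ m ih =>
    obtain ⟨Λ', hΛ'⟩ := ih
    refine ⟨(univ.image fun μ : Fin m → ZMod 3 => Fin.cons 1 μ)
        ∪ Λ'.image (Fin.cons 0), ?_⟩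
    intro c hc
    have hdisj : Disjoint (((univ : Finset (Fin m → ZMod 3)).image
          fun μ => Fin.cons 1 μ).filter fun l => ∑ j, l j * c j ≠ 0)
        ((Λ'.image (Fin.cons (0 : ZMod 3))).filter fun l => ∑ j, l j * c j ≠ 0) := by
      apply Finset.disjoint_filter_filter
      rw [Finset.disjoint_left]
      rintro x hx hy
      simp only [Finset.mem_image] at hx hy
      obtain ⟨μ, -, rfl⟩ := hx
      obtain ⟨l0, -, h⟩ := hy
      have := congrFun h 0
      simp [Fin.cons_zero] at this
    rw [Finset.filter_union, Finset.card_union_of_disjoint hdisj]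
    have hsum : ∀ (a : ZMod 3) (μ : Fin m → ZMod 3),
        ∑ j, (Fin.cons a μ : Fin (m+1) → ZMod 3) j * c j
          = a * c 0 + ∑ j, μ j * c (Fin.succ j) := by
      intro a μ
      rw [Fin.sum_univ_succ]
      simp [Fin.cons_zero, Fin.cons_succ]
    -- rewrite filters over images
    have hinj1 : Function.Injective
        (fun μ : Fin m → ZMod 3 => (Fin.cons 1 μ : Fin (m+1) → ZMod 3)) :=
      fun x y h => by
        funext j; have := congrFun h j.succ; simpa [Fin.cons_succ] using this
    have hinj0 : Function.Injective
        (fun μ : Fin m → ZMod 3 => (Fin.cons 0 μ : Fin (m+1) → ZMod 3)) :=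
      fun x y h => by
        funext j; have := congrFun h j.succ; simpa [Fin.cons_succ] using this
    have himg1 : (((univ : Finset (Fin m → ZMod 3)).image fun μ => Fin.cons 1 μ).filter
          fun l => ∑ j, l j * c j ≠ 0).card
        = (univ.filter fun μ : Fin m → ZMod 3 =>
            1 * c 0 + ∑ j, μ j * c (Fin.succ j) ≠ 0).card := by
      rw [Finset.filter_image]
      rw [Finset.card_image_of_injective _ hinj1]
      congr 1
      apply Finset.filter_congr
      intro μ _
      simp only [Function.comp_apply, hsum]
    have himg0 : ((Λ'.image (Fin.cons (0 : ZMod 3))).filter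
          fun l => ∑ j, l j * c j ≠ 0).card
        = (Λ'.filter fun μ : Fin m → ZMod 3 => ∑ j, μ j * c (Fin.succ j) ≠ 0).card := by
      rw [Finset.filter_image]
      rw [Finset.card_image_of_injective _ hinj0]
      congr 1
      apply Finset.filter_congr
      intro μ _
      simp only [Function.comp_apply, hsum, zero_mul, zero_add]
    rw [himg1, himg0]
    by_cases hc' : (fun j => c (Fin.succ j)) = (0 : Fin m → ZMod 3)
    · -- tail is zero, so c 0 ≠ 0
      have hc0 : c 0 ≠ 0 := by
        intro h0
        apply hc
        funext j
        refine Fin.cases ?_ ?_ j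
        · exact h0
        · intro k; exact congrFun hc' k
      have h1 : (univ.filter fun μ : Fin m → ZMod 3 =>
            1 * c 0 + ∑ j, μ j * c (Fin.succ j) ≠ 0).card
          = (univ : Finset (Fin m → ZMod 3)).card := by
        rw [Finset.filter_true_of_mem]
        intro μ _
        have : ∀ j, c (Fin.succ j) = 0 := fun j => congrFun hc' j
        simp [this, hc0]
      have h2 : (Λ'.filter fun μ : Fin m → ZMod 3 =>
            ∑ j, μ j * c (Fin.succ j) ≠ 0).card = 0 := by
        rw [Finset.card_eq_zero, Finset.filter_eq_empty_iff]
        intro μ _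
        have : ∀ j, c (Fin.succ j) = 0 := fun j => congrFun hc' j
        simp [this]
      rw [h1, h2, Nat.add_zero]
      simp [Finset.card_univ]
      exact Odd.pow (by decide)
    · -- tail nonzero
      have hB : Odd (Λ'.filter fun μ : Fin m → ZMod 3 =>
          ∑ j, μ j * c (Fin.succ j) ≠ 0).card := hΛ' _ hc'
      have hA : Even (univ.filter fun μ : Fin m → ZMod 3 =>
          1 * c 0 + ∑ j, μ j * c (Fin.succ j) ≠ 0).card := by
        have hfib : Odd (univ.filter fun μ : Fin m → ZMod 3 =>
            ∑ j, μ j * c (Fin.succ j) = -(c 0)).card :=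
          fiber_card_odd m _ hc' _
        have hkey := Finset.card_filter_add_card_filter_not
            (s := (univ : Finset (Fin m → ZMod 3)))
            (p := fun μ : Fin m → ZMod 3 => 1 * c 0 + ∑ j, μ j * c (Fin.succ j) ≠ 0)
        have heqf : (univ.filter fun μ : Fin m → ZMod 3 =>
              ¬(1 * c 0 + ∑ j, μ j * c (Fin.succ j) ≠ 0))
            = (univ.filter fun μ : Fin m → ZMod 3 =>
              ∑ j, μ j * c (Fin.succ j) = -(c 0)) := by
          apply Finset.filter_congr
          intro μ _
          simp only [not_not, one_mul]
          constructor
          · intro h; linear_combination h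
          · intro h; linear_combination h
        rw [heqf] at hkey
        have huniv : Odd (univ : Finset (Fin m → ZMod 3)).card := by
          simp [Finset.card_univ]
          exact Odd.pow (by decide)
        rw [← hkey] at huniv
        rcases Nat.even_or_odd (univ.filter fun μ : Fin m → ZMod 3 =>
            1 * c 0 + ∑ j, μ j * c (Fin.succ j) ≠ 0).card with h | h
        · exact h
        · exact absurd ((Nat.odd_add.mp huniv).mp h) (Nat.not_even_iff_odd.mpr hfib)
      exact hA.add_odd hB

lemma sOp_eq_cast (x : ZMod 6) :
    sOp x = if (ZMod.castHom (show (3:ℕ) ∣ 6 by norm_num) (ZMod 3) x = 0) then 0 else 3 := by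
  revert x; decide

/-- If `D` is a finite subdirect power of the algebra `𝔸 = ⟨ZMod 6; +, s, 3⟩` and `I` is an
ideal of `D` of index at most 2, then the constant `c = 3` of `D` belongs to `I`. -/
theorem const_three_mem_ideal_of_index_le_two
    (n : ℕ) (hn : 0 < n) (D : AddSubgroup (Fin n → ZMod 6))
    (hc : (fun _ => (3 : ZMod 6)) ∈ D)
    (hs : ∀ d ∈ D, (fun i => sOp (d i)) ∈ D)
    (hsubdir : ∀ (i : Fin n) (a : ZMod 6), ∃ d ∈ D, d i = a)
    (I : Set (Fin n → ZMod 6)) (hID : I ⊆ (D : Set (Fin n → ZMod 6)))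
    (h0 : (0 : Fin n → ZMod 6) ∈ I)
    (hsubtr : ∀ a ∈ I, ∀ b ∈ I, a - b ∈ I)
    (hideal : ∀ d ∈ D, ∀ d' ∈ D, d - d' ∈ I →
      (fun i => sOp (d i)) - (fun i => sOp (d' i)) ∈ I)
    (hindex : ∃ d₀ ∈ D, ∀ d ∈ D, d ∈ I ∨ d - d₀ ∈ I) :
    (fun _ => (3 : ZMod 6)) ∈ I := by
  classical
  obtain ⟨d₀, hd₀D, hd₀⟩ := hindex
  by_cases hcI : (fun _ => (3 : ZMod 6)) ∈ I
  · exact hcI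
  -- otherwise: c - d₀ ∈ I
  have hc0 : (fun _ => (3 : ZMod 6)) - d₀ ∈ I := (hd₀ _ hc).resolve_left hcI
  -- s∘d ∈ I for every d ∈ D
  have hsI : ∀ d ∈ D, (fun i => sOp (d i)) ∈ I := by
    intro d hd
    rcases hd₀ d hd with h | h
    · have hd0 : d - 0 ∈ I := by simpa using h
      have := hideal d hd 0 D.zero_mem hd0
      have he : (fun i => sOp ((0 : Fin n → ZMod 6) i)) = (0 : Fin n → ZMod 6) := by
        funext i; simp [sOp]
      rw [he, sub_zero] at this
      exact this
    · have hdc : d - (fun _ => (3 : ZMod 6)) ∈ I := by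
        have h2 := hsubtr _ h _ hc0
        have : d - d₀ - ((fun _ => (3 : ZMod 6)) - d₀) = d - fun _ => (3 : ZMod 6) := by
          abel
        rwa [this] at h2
      have := hideal d hd _ hc hdc
      have he : (fun i => sOp ((fun _ => (3 : ZMod 6)) i)) = (0 : Fin n → ZMod 6) := by
        funext i; simp [sOp]
      rw [he, sub_zero] at this
      exact this
  -- I is closed under addition and finite sums
  have hadd : ∀ a ∈ I, ∀ b ∈ I, a + b ∈ I := by
    intro a ha b hb
    have := hsubtr a ha (0 - b) (hsubtr 0 h0 b hb)
    have he : a - (0 - b) = a + b := by abel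
    rwa [he] at this
  -- pick witnesses e i with e i i = 1
  choose e heD he1 using fun i => hsubdir i 1
  obtain ⟨Λ, hΛ⟩ := exists_lambda n
  set π : ZMod 6 →+* ZMod 3 := ZMod.castHom (show (3:ℕ) ∣ 6 by norm_num) (ZMod 3) with hπdef
  set w : (Fin n → ZMod 3) → (Fin n → ZMod 6) :=
    fun l => ∑ j, (l j).val • e j with hwdef
  have hwD : ∀ l, w l ∈ D := fun l =>
    sum_mem fun j _ => AddSubgroup.nsmul_mem D (heD j) _
  have key : ∀ (l : Fin n → ZMod 3) (i : Fin n),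
      sOp (w l i) = if (∑ j, l j * π (e j i)) = 0 then 0 else 3 := by
    intro l i
    have hπw : π (w l i) = ∑ j, l j * π (e j i) := by
      have h1 : w l i = ∑ j, (l j).val • (e j i) := by
        rw [hwdef]
        exact Finset.sum_apply i Finset.univ fun j => (l j).val • e j
      rw [h1, map_sum]
      refine Finset.sum_congr rfl fun j _ => ?_
      show π ((l j).val • e j i) = l j * π (e j i)
      rw [map_nsmul, nsmul_eq_mul]
      congr 1
      exact ZMod.natCast_rightInverse (l j)
    rw [sOp_eq_cast (w l i), ← hπdef, hπw]
  -- the sum over Λ is the constant-3 function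
  have hsum : (∑ l ∈ Λ, fun i => sOp (w l i)) = fun _ => (3 : ZMod 6) := by
    funext i
    rw [Finset.sum_apply]
    have hne : (fun j => π (e j i)) ≠ 0 := by
      intro h
      have h1 := congrFun h i
      rw [he1 i] at h1
      rw [map_one] at h1
      exact one_ne_zero h1
    have hodd := hΛ _ hne
    have h2 : ∑ l ∈ Λ, sOp (w l i)
        = ∑ l ∈ Λ, if (∑ j, l j * π (e j i)) = 0 then (0 : ZMod 6) else 3 :=
      Finset.sum_congr rfl fun l _ => key l i
    rw [h2, Finset.sum_ite, Finset.sum_const, Finset.sum_const, smul_zero, zero_add]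
    obtain ⟨k, hk⟩ := hodd
    have hcard : (Λ.filter fun l => ¬(∑ j, l j * π (e j i)) = 0).card = 2 * k + 1 := by
      rw [← hk]
    rw [hcard]
    show (2 * k + 1 : ℕ) • (3 : ZMod 6) = 3
    rw [nsmul_eq_mul]
    push_cast
    ring_nf
    rw [show ((6 : ZMod 6) = 0) from by decide, mul_zero, add_zero]
  have hmem : ∀ S : Finset (Fin n → ZMod 3), (∑ l ∈ S, fun i => sOp (w l i)) ∈ I := by
    intro S
    induction S using Finset.induction_on with
    | empty => simpa using h0
    | insert _ _ hx ih =>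
      rw [Finset.sum_insert hx]
      exact hadd _ (hsI _ (hwD _)) _ ih
  have hmemΛ := hmem Λ
  rw [hsum] at hmemΛ
  exact hmemΛ
end

section
/- Let n be a positive integer and let D be an additive subgroup of the functions Fin n → ZMod 6 that contains the constant function 3, is closed under coordinatewise application of s, and has all coordinate projections D → ZMod 6 surjective. Let I ⊆ D be a subset that is closed under subtraction and contains 0 (an additive subgroup of D), such that for all d, d' ∈ D, if d − d' ∈ I then (s∘d) − (s∘d') ∈ I (here s∘d denotes coordinatewise application of s). Suppose I contains every element of D of additive order dividing 3, i.e., every d ∈ D with 3·d = 0 belongs to I. Then the constant function 3 belongs to I. -/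
lemma sOp_mul_sOp (a b : ZMod 6) : sOp a * sOp b = sOp (a + b) + sOp (a - b) := by
  revert a b; decide

lemma sOp_triple (a : ZMod 6) : sOp (a + a + a) = 0 := by revert a; decide

lemma sOp_val (a : ZMod 6) : sOp a = 0 ∨ sOp a = 3 := by revert a; decide

lemma sOp_one : sOp 1 = 3 := by decide

lemma three_nsmul_aux (a : ZMod 6) : (3 : ℕ) • (a - (a + a + a)) = 0 := by revert a; decide

/-- If `D` is a finite subdirect power of the algebra `𝔸 = ⟨ZMod 6; +, s, 3⟩` and `I` is an
ideal of `D` containing the Sylow 3-subgroup `V₃(D) = {d ∈ D | 3 • d = 0}`, then the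
constant `c = 3` of `D` belongs to `I`. -/
theorem const_three_mem_ideal_of_sylow_three_subset
    (n : ℕ) (hn : 0 < n) (D : AddSubgroup (Fin n → ZMod 6))
    (hc : (fun _ => (3 : ZMod 6)) ∈ D)
    (hs : ∀ d ∈ D, (fun i => sOp (d i)) ∈ D)
    (hsubdir : ∀ (i : Fin n) (a : ZMod 6), ∃ d ∈ D, d i = a)
    (I : Set (Fin n → ZMod 6)) (hID : I ⊆ (D : Set (Fin n → ZMod 6)))
    (h0 : (0 : Fin n → ZMod 6) ∈ I)
    (hsubtr : ∀ a ∈ I, ∀ b ∈ I, a - b ∈ I)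
    (hideal : ∀ d ∈ D, ∀ d' ∈ D, d - d' ∈ I →
      (fun i => sOp (d i)) - (fun i => sOp (d' i)) ∈ I)
    (hV3 : ∀ d ∈ D, (3 : ℕ) • d = 0 → d ∈ I) :
    (fun _ => (3 : ZMod 6)) ∈ I := by
  classical
  -- I is an additive subgroup
  have hneg : ∀ a ∈ I, -a ∈ I := fun a ha => by simpa using hsubtr 0 h0 a ha
  have hadd : ∀ a ∈ I, ∀ b ∈ I, a + b ∈ I := fun a ha b hb => by
    simpa [sub_neg_eq_add] using hsubtr a ha (-b) (hneg b hb)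
  set J : AddSubgroup (Fin n → ZMod 6) :=
    { carrier := I
      zero_mem' := h0
      add_mem' := fun {a b} ha hb => hadd a ha b hb
      neg_mem' := fun {a} ha => hneg a ha }
  -- s∘d ∈ I for all d ∈ D
  have hsI : ∀ d ∈ D, (fun i => sOp (d i)) ∈ I := by
    intro d hd
    have hd3 : d + d + d ∈ D := D.add_mem (D.add_mem hd hd) hd
    have hsub : d - (d + d + d) ∈ I := by
      refine hV3 _ (D.sub_mem hd hd3) ?_
      funext i
      simpa using three_nsmul_aux (d i)
    have h := hideal d hd (d + d + d) hd3 hsub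
    have hz : (fun i => sOp ((d + d + d) i)) = (0 : Fin n → ZMod 6) := by
      funext i; exact sOp_triple (d i)
    rw [hz, sub_zero] at h
    exact h
  -- the additive span of the s∘d's
  set G : Set (Fin n → ZMod 6) := {x | ∃ v ∈ D, x = fun i => sOp (v i)}
  set S : AddSubgroup (Fin n → ZMod 6) := AddSubgroup.closure G
  have hSJ : S ≤ J := by
    rw [AddSubgroup.closure_le]
    rintro x ⟨v, hv, rfl⟩
    exact hsI v hv
  -- values of elements of S are in {0,3}
  have hS03 : ∀ x ∈ S, ∀ i, x i = 0 ∨ x i = 3 := by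
    intro x hx
    induction hx using AddSubgroup.closure_induction with
    | mem x hx =>
        obtain ⟨v, hv, rfl⟩ := hx
        intro i; exact sOp_val (v i)
    | zero => intro i; left; rfl
    | add x y _ _ hx hy =>
        intro i
        rcases hx i with h1 | h1 <;> rcases hy i with h2 | h2 <;>
          simp [Pi.add_apply, h1, h2] <;> exact of_decide_eq_true rfl
    | neg x _ hx =>
        intro i
        rcases hx i with h1 | h1 <;> simp [Pi.neg_apply, h1] <;> exact of_decide_eq_true rfl
  -- S is closed under pointwise multiplication by s∘w
  have hSmul : ∀ x ∈ S, ∀ w ∈ D, (fun i => x i * sOp (w i)) ∈ S := by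
    intro x hx
    induction hx using AddSubgroup.closure_induction with
    | mem x hx =>
        obtain ⟨v, hv, rfl⟩ := hx
        intro w hw
        have : (fun i => sOp (v i) * sOp (w i)) =
            (fun i => sOp ((v + w) i)) + (fun i => sOp ((v - w) i)) := by
          funext i
          simp only [Pi.add_apply, Pi.sub_apply]
          exact sOp_mul_sOp (v i) (w i)
        rw [this]
        exact S.add_mem
          (AddSubgroup.subset_closure ⟨v + w, D.add_mem hv hw, rfl⟩)
          (AddSubgroup.subset_closure ⟨v - w, D.sub_mem hv hw, rfl⟩)
    | zero =>
        intro w hw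
        have : (fun i => (0 : Fin n → ZMod 6) i * sOp (w i)) = (0 : Fin n → ZMod 6) := by
          funext i; simp
        rw [this]; exact S.zero_mem
    | add x y _ _ hx hy =>
        intro w hw
        have : (fun i => (x + y) i * sOp (w i)) =
            (fun i => x i * sOp (w i)) + (fun i => y i * sOp (w i)) := by
          funext i; simp [add_mul]
        rw [this]; exact S.add_mem (hx w hw) (hy w hw)
    | neg x _ hx =>
        intro w hw
        have : (fun i => (-x) i * sOp (w i)) = -(fun i => x i * sOp (w i)) := by
          funext i; simp
        rw [this]; exact S.neg_mem (hx w hw)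
  -- main induction: for any finite set of coordinates there is x ∈ S equal to 3 there
  have main : ∀ T : Finset (Fin n), ∃ x ∈ S, ∀ i ∈ T, x i = 3 := by
    intro T
    induction T using Finset.induction_on with
    | empty => exact ⟨0, S.zero_mem, by simp⟩
    | @insert j T hj ih =>
        obtain ⟨x, hxS, hx3⟩ := ih
        obtain ⟨w, hw, hwj⟩ := hsubdir j 1
        refine ⟨x + (fun i => sOp (w i)) + (fun i => x i * sOp (w i)), ?_, ?_⟩
        · exact S.add_mem (S.add_mem hxS
            (AddSubgroup.subset_closure ⟨w, hw, rfl⟩)) (hSmul x hxS w hw)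
        · intro i hi
          simp only [Pi.add_apply]
          rcases Finset.mem_insert.mp hi with rfl | hiT
          · rw [hwj, sOp_one]
            rcases hS03 x hxS i with h | h <;> rw [h] <;> decide
          · rw [hx3 i hiT]
            rcases sOp_val (w i) with h | h <;> rw [h] <;> decide
  obtain ⟨x, hxS, hx3⟩ := main Finset.univ
  have : x = (fun _ => (3 : ZMod 6)) := by
    funext i; exact hx3 i (Finset.mem_univ i)
  rw [← this]
  exact hSJ hxS
end

section
/- Let n be a positive integer and let D be an additive subgroup of the functions Fin n → ZMod 6 such that every coordinate projection D → ZMod 6 is surjective. Let V = {d ∈ D | 3·d = 0}, and let P be a finite set of elements of V such that 0 ∉ P and for every nonzero d ∈ V exactly one of d, −d belongs to P. Then the coordinatewise sum Σ_{d ∈ P} (s∘d) equals the constant function 3; that is, for every index i, Σ_{d ∈ P} s(d(i)) = 3 in ZMod 6. -/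
/-- Let `D ≤ (ZMod 6)^n` be subdirect, `V = {d ∈ D | 3 • d = 0}` its Sylow 3-subgroup, and `P`
a set of representatives of the orbits `{d, -d}` of nonzero elements of `V` under negation.
Then `∑_{d ∈ P} (s ∘ d)` is the constant function `3`. -/
theorem sum_s_over_orbit_representatives_eq_const_three
    (n : ℕ) (hn : 0 < n) (D : AddSubgroup (Fin n → ZMod 6))
    (hsubdir : ∀ (i : Fin n) (a : ZMod 6), ∃ d ∈ D, d i = a)
    (P : Finset (Fin n → ZMod 6))
    (hPV : ∀ p ∈ P, p ∈ D ∧ (3 : ℕ) • p = 0)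
    (h0P : (0 : Fin n → ZMod 6) ∉ P)
    (hrep : ∀ d ∈ D, (3 : ℕ) • d = 0 → d ≠ 0 → Xor' (d ∈ P) (-d ∈ P)) :
    ∀ i : Fin n, ∑ p ∈ P, sOp (p i) = (3 : ZMod 6) := by
  classical
  intro i
  -- the full 3-torsion part V as a finset
  set Vs : Finset (Fin n → ZMod 6) := insert 0 (P ∪ P.image (fun p => -p)) with hVs
  have hmem : ∀ v, v ∈ Vs ↔ (v ∈ D ∧ (3 : ℕ) • v = 0) := by
    intro v
    simp only [hVs, Finset.mem_insert, Finset.mem_union, Finset.mem_image]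
    constructor
    · rintro (rfl | hv | ⟨p, hp, rfl⟩)
      · exact ⟨D.zero_mem, smul_zero _⟩
      · exact hPV v hv
      · obtain ⟨hd, h3⟩ := hPV p hp
        exact ⟨D.neg_mem hd, by rw [smul_neg, h3, neg_zero]⟩
    · rintro ⟨hd, h3⟩
      by_cases h0 : v = 0
      · exact Or.inl h0
      · rcases hrep v hd h3 h0 with ⟨hp, _⟩ | ⟨hnp, _⟩
        · exact Or.inr (Or.inl hp)
        · exact Or.inr (Or.inr ⟨-v, hnp, neg_neg v⟩)
  -- cardinality of Vs is odd
  have hdisj : Disjoint P (P.image (fun p => -p)) := by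
    rw [Finset.disjoint_left]
    rintro a ha hb
    obtain ⟨p, hp, rfl⟩ := Finset.mem_image.mp hb
    have hp0 : p ≠ 0 := fun h => h0P (h ▸ hp)
    rcases hrep p (hPV p hp).1 (hPV p hp).2 hp0 with ⟨_, hn2⟩ | ⟨_, hn1⟩
    · exact hn2 ha
    · exact hn1 hp
  have h0nm : (0 : Fin n → ZMod 6) ∉ P ∪ P.image (fun p => -p) := by
    rw [Finset.mem_union]
    rintro (h | h)
    · exact h0P h
    · obtain ⟨p, hp, hpe⟩ := Finset.mem_image.mp h
      have : p = 0 := by rw [← neg_neg p, hpe, neg_zero]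
      exact h0P (this ▸ hp)
  have hcard : Vs.card = 2 * P.card + 1 := by
    rw [hVs, Finset.card_insert_of_notMem h0nm, Finset.card_union_of_disjoint hdisj,
      Finset.card_image_of_injective _ neg_injective]
    ring
  -- element w of Vs with w i = 2
  obtain ⟨d, hdD, hdi⟩ := hsubdir i 1
  set w : Fin n → ZMod 6 := d + d with hw
  have hwD : w ∈ D := D.add_mem hdD hdD
  have hw3 : (3 : ℕ) • w = 0 := by
    funext j
    have h : ∀ x : ZMod 6, (3 : ℕ) • (x + x) = 0 := by decide
    simpa [hw] using h (d j)
  have hwV : w ∈ Vs := (hmem w).mpr ⟨hwD, hw3⟩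
  have hwi : w i = 2 := by
    have : (1 : ZMod 6) + 1 = 2 := by decide
    simp [hw, hdi, this]
  -- values of elements of Vs at i lie in {0,2,4}
  have hval : ∀ v ∈ Vs, v i = 0 ∨ v i = 2 ∨ v i = 4 := by
    intro v hv
    have h3 : (3 : ℕ) • (v i) = 0 := by
      have := (hmem v).mp hv
      have := congrFun this.2 i
      simpa using this
    revert h3
    have : ∀ x : ZMod 6, (3 : ℕ) • x = 0 → x = 0 ∨ x = 2 ∨ x = 4 := by decide
    exact this (v i)
  -- fibers of evaluation at i
  set F : ZMod 6 → Finset (Fin n → ZMod 6) := fun c => Vs.filter (fun v => v i = c) with hF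
  -- all fibers are shifted by w
  have hshift : ∀ c : ZMod 6, (F c).card = (F (c + 2)).card := by
    intro c
    apply Finset.card_bij' (fun v _ => v + w) (fun v _ => v - w)
    · intro v hv
      simp only [hF, Finset.mem_filter] at hv ⊢
      obtain ⟨hvV, hvi⟩ := hv
      obtain ⟨hvD, hv3⟩ := (hmem v).mp hvV
      refine ⟨(hmem _).mpr ⟨D.add_mem hvD hwD, ?_⟩, ?_⟩
      · rw [smul_add, hv3, hw3, add_zero]
      · simp [hvi, hwi]
    · intro v hv
      simp only [hF, Finset.mem_filter] at hv ⊢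
      obtain ⟨hvV, hvi⟩ := hv
      obtain ⟨hvD, hv3⟩ := (hmem v).mp hvV
      refine ⟨(hmem _).mpr ⟨D.sub_mem hvD hwD, ?_⟩, ?_⟩
      · rw [smul_sub, hv3, hw3, sub_zero]
      · simp [Pi.sub_apply, hvi, hwi]
    · intro v _; simp
    · intro v _; simp
  have h02 : (F 0).card = (F 2).card := by simpa using hshift 0
  have h24 : (F 2).card = (F 4).card := by
    have h := hshift 2; rwa [show (2 : ZMod 6) + 2 = 4 by decide] at h
  -- Vs is the disjoint union of the three fibers
  have hdisj02 : Disjoint (F 0) (F 2) := by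
    rw [Finset.disjoint_left]
    intro v hv hv'
    simp only [hF, Finset.mem_filter] at hv hv'
    rw [hv.2] at hv'
    exact absurd hv'.2 (by decide)
  have hdisj024 : Disjoint (F 0 ∪ F 2) (F 4) := by
    rw [Finset.disjoint_left]
    intro v hv hv'
    simp only [hF, Finset.mem_filter, Finset.mem_union] at hv hv'
    rcases hv with h | h <;> rw [h.2] at hv' <;> exact absurd hv'.2 (by decide)
  have hunion : Vs = (F 0 ∪ F 2) ∪ F 4 := by
    ext v
    simp only [hF, Finset.mem_union, Finset.mem_filter]
    constructor
    · intro hv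
      rcases hval v hv with h | h | h
      · exact Or.inl (Or.inl ⟨hv, h⟩)
      · exact Or.inl (Or.inr ⟨hv, h⟩)
      · exact Or.inr ⟨hv, h⟩
    · rintro ((⟨h, _⟩ | ⟨h, _⟩) | ⟨h, _⟩) <;> exact h
  have hcard3 : Vs.card = 3 * (F 2).card := by
    rw [hunion, Finset.card_union_of_disjoint hdisj024,
      Finset.card_union_of_disjoint hdisj02, h02, ← h24]
    ring
  have hVodd : Odd Vs.card := ⟨P.card, by omega⟩
  have hF2odd : Odd (F 2).card := by
    rw [hcard3] at hVodd
    rcases Nat.odd_mul.mp hVodd with ⟨_, h⟩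
    exact h
  -- the nonzero-at-i elements of P biject with F 2
  set Q : Finset (Fin n → ZMod 6) := P.filter (fun p => p i ≠ 0) with hQ
  have hQcard : Q.card = (F 2).card := by
    apply Finset.card_bij (fun p _ => if p i = 2 then p else -p)
    · intro p hp
      simp only [hQ, Finset.mem_filter] at hp
      obtain ⟨hpP, hpi⟩ := hp
      obtain ⟨hpD, hp3⟩ := hPV p hpP
      have hpV : p ∈ Vs := (hmem p).mpr ⟨hpD, hp3⟩
      rcases hval p hpV with h | h | h
      · exact absurd h hpi
      · simp only [hF, Finset.mem_filter, if_pos h]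
        exact ⟨hpV, h⟩
      · rw [if_neg (by rw [h]; decide)]
        simp only [hF, Finset.mem_filter]
        refine ⟨(hmem _).mpr ⟨D.neg_mem hpD, by rw [smul_neg, hp3, neg_zero]⟩, ?_⟩
        simp [h]
        decide
    · intro p hp q hq heq
      simp only [hQ, Finset.mem_filter] at hp hq
      have hp0 : p ≠ 0 := fun h => h0P (h ▸ hp.1)
      have hq0 : q ≠ 0 := fun h => h0P (h ▸ hq.1)
      by_cases h1 : p i = 2 <;> by_cases h2 : q i = 2 <;>
        simp only [if_pos, if_neg, h1, h2, if_true, if_false] at heq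
      · exact heq
      · exfalso
        rcases hrep q (hPV q hq.1).1 (hPV q hq.1).2 hq0 with ⟨_, hn⟩ | ⟨_, hn⟩
        · exact hn (heq ▸ hp.1)
        · exact hn hq.1
      · exfalso
        rcases hrep p (hPV p hp.1).1 (hPV p hp.1).2 hp0 with ⟨_, hn⟩ | ⟨_, hn⟩
        · exact hn (heq ▸ hq.1)
        · exact hn hp.1
      · exact neg_injective heq
    · intro v hv
      simp only [hF, Finset.mem_filter] at hv
      obtain ⟨hvV, hvi⟩ := hv
      obtain ⟨hvD, hv3⟩ := (hmem v).mp hvV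
      have hv0 : v ≠ 0 := by
        intro h
        rw [h] at hvi
        exact (by decide : (0 : ZMod 6) ≠ 2) (by simpa using hvi)
      rcases hrep v hvD hv3 hv0 with ⟨hp, _⟩ | ⟨hnp, _⟩
      · refine ⟨v, ?_, ?_⟩
        · simp only [hQ, Finset.mem_filter]
          exact ⟨hp, by rw [hvi]; decide⟩
        · rw [if_pos hvi]
      · refine ⟨-v, ?_, ?_⟩
        · simp only [hQ, Finset.mem_filter]
          refine ⟨hnp, ?_⟩
          simp [hvi]
          decide
        · rw [if_neg (by simp [hvi]; decide), neg_neg]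
  -- compute the sum
  have hsum : ∑ p ∈ P, sOp (p i) = Q.card • (3 : ZMod 6) := by
    rw [← Finset.sum_filter_add_sum_filter_not P (fun p => p i ≠ 0)]
    have h1 : ∑ p ∈ P.filter (fun p => ¬ p i ≠ 0), sOp (p i) = 0 := by
      apply Finset.sum_eq_zero
      intro p hp
      simp only [Finset.mem_filter, not_not] at hp
      rw [hp.2]
      decide
    have h2 : ∑ p ∈ Q, sOp (p i) = Q.card • (3 : ZMod 6) := by
      rw [← Finset.sum_const]
      apply Finset.sum_congr rfl
      intro p hp
      simp only [hQ, Finset.mem_filter] at hp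
      obtain ⟨hpD, hp3⟩ := hPV p hp.1
      rcases hval p ((hmem p).mpr ⟨hpD, hp3⟩) with h | h | h
      · exact absurd h hp.2
      · rw [h]; decide
      · rw [h]; decide
    rw [h1, add_zero]
    exact h2
  rw [hsum]
  obtain ⟨m, hm⟩ := hF2odd
  rw [hQcard, hm, nsmul_eq_mul]
  push_cast
  have h6 : (6 : ZMod 6) = 0 := by decide
  ring_nf
  rw [h6, mul_zero, add_zero]
end

section
/- Let θ = {(x, y) ∈ ZMod 6 × ZMod 6 | x − y ∈ {0, 3}}. Then: (i) θ is closed under coordinatewise addition, contains (3, 3), and is closed under the map (x, y) ↦ (s(x), s(y)); moreover (s(x), s(y)) lies on the diagonal (s(x) = s(y)) for every (x, y) ∈ θ; and (ii) the equivalence relation Δ on θ with exactly two classes, the diagonal {(x, x)} and the off-diagonal {(x, y) ∈ θ | x ≠ y}, is a congruence of the algebra ⟨θ; +, s×s, (3,3)⟩: if p, q ∈ θ lie in the same Δ-class and p', q' ∈ θ lie in the same Δ-class, then p + p' and q + q' lie in the same Δ-class, and (s×s)(p) and (s×s)(q) lie in the same Δ-class. -/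
set_option maxRecDepth 10000


/-- The congruence `θ = {(x, y) | x - y ∈ {0, 3}}` of `𝔸 = ⟨ZMod 6; +, s, 3⟩`. -/
def thetaRel : Set (ZMod 6 × ZMod 6) := {p | p.1 - p.2 = 0 ∨ p.1 - p.2 = 3}

/-- (i) `θ`, viewed as a subset of `(ZMod 6)²`, is a subalgebra of `𝔸²` on which `s × s` takes
values in the diagonal; (ii) the two-class equivalence relation `Δ` on `θ` (diagonal vs.
off-diagonal) is a congruence of the algebra `⟨θ; +, s × s, (3, 3)⟩`. -/
theorem theta_subalgebra_and_delta_congruence :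
    -- (i) θ is a subalgebra of 𝔸², and s × s maps θ into the diagonal
    (∀ p ∈ thetaRel, ∀ q ∈ thetaRel, p + q ∈ thetaRel) ∧
    ((3, 3) : ZMod 6 × ZMod 6) ∈ thetaRel ∧
    (∀ p ∈ thetaRel, ((sOp p.1, sOp p.2) : ZMod 6 × ZMod 6) ∈ thetaRel ∧ sOp p.1 = sOp p.2) ∧
    -- (ii) Δ (same class iff "on the diagonal" agrees) is a congruence of ⟨θ; +, s × s, (3,3)⟩
    (∀ p ∈ thetaRel, ∀ q ∈ thetaRel, ∀ p' ∈ thetaRel, ∀ q' ∈ thetaRel,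
      (p.1 = p.2 ↔ q.1 = q.2) → (p'.1 = p'.2 ↔ q'.1 = q'.2) →
        ((p + p').1 = (p + p').2 ↔ (q + q').1 = (q + q').2)) ∧
    (∀ p ∈ thetaRel, ∀ q ∈ thetaRel,
      (p.1 = p.2 ↔ q.1 = q.2) → (sOp p.1 = sOp p.2 ↔ sOp q.1 = sOp q.2)) := by
  simp only [thetaRel, Set.mem_setOf_eq]
  refine ⟨by decide, by decide, by decide, ?_, by decide⟩
  rintro p hp q hq p' hp' q' hq' h1 h2
  have key' : ∀ r : ZMod 6 × ZMod 6, (r.1 = r.2) ↔ (r.1 - r.2 = 0) := fun r => sub_eq_zero.symm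
  have e : ∀ a b : ZMod 6 × ZMod 6, (a+b).1 - (a+b).2 = (a.1-a.2) + (b.1-b.2) := by intro a b; show a.1+b.1 - (a.2+b.2) = _; ring
  rw [key' p, key' q] at h1
  rw [key' p', key' q'] at h2
  rw [key' _, key' _, e, e]
  rcases hp with h|h <;> rcases hq with h'|h' <;> rcases hp' with h''|h'' <;> rcases hq' with h'''|h''' <;>
    simp only [h, h', h'', h'''] at h1 h2 ⊢ <;> revert h1 h2 <;> decide
end
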